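/- arXiv:2408.03141 — 2 statements merged into one kernel-verified Lean document; each statement's English description precedes it below -/
import Mathlib

section
/- Let Γ be a groupoid and R a gr-simple object unital Γ-graded ring. The following are equivalent: (1) R is right gr-semisimple; (2) R is right Γ₀-artinian; (3) R has a minimal graded right ideal. Moreover, the corresponding left-sided statements are also equivalent to each other. -/
set_option autoImplicit false

noncomputable section

universe u v w x y

/-- A groupoid structure on its set `Γ` of morphisms.  Objects are identified with
the identity morphisms: `src γ` and `tgt γ` are the source and target identities
(`d(γ)` and `r(γ)`), and `comp γ δ h` is the composite `γδ`, which is defined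
exactly when `src γ = tgt δ`. -/
structure Gpd (Γ : Type u) where
  src : Γ → Γ
  tgt : Γ → Γ
  inv : Γ → Γ
  comp : (γ δ : Γ) → src γ = tgt δ → Γ
  src_src : ∀ γ, src (src γ) = src γ
  tgt_src : ∀ γ, tgt (src γ) = src γ
  src_tgt : ∀ γ, src (tgt γ) = tgt γ
  tgt_tgt : ∀ γ, tgt (tgt γ) = tgt γ
  src_comp : ∀ γ δ (h : src γ = tgt δ), src (comp γ δ h) = src δ
  tgt_comp : ∀ γ δ (h : src γ = tgt δ), tgt (comp γ δ h) = tgt γ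
  comp_id : ∀ γ, comp γ (src γ) (tgt_src γ).symm = γ
  id_comp : ∀ γ, comp (tgt γ) γ (src_tgt γ) = γ
  comp_assoc : ∀ γ δ ε (h₁ : src γ = tgt δ) (h₂ : src δ = tgt ε),
    comp (comp γ δ h₁) ε ((src_comp γ δ h₁).trans h₂)
      = comp γ (comp δ ε h₂) (h₁.trans (tgt_comp δ ε h₂).symm)
  src_inv : ∀ γ, src (inv γ) = tgt γ
  tgt_inv : ∀ γ, tgt (inv γ) = src γ
  inv_inv : ∀ γ, inv (inv γ) = γ
  comp_inv : ∀ γ, comp γ (inv γ) (tgt_inv γ).symm = tgt γ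
  inv_comp : ∀ γ, comp (inv γ) γ (src_inv γ) = src γ

namespace Gpd

variable {Γ : Type u} (G : Gpd Γ)

/-- `e` is an object of the groupoid, i.e. an identity morphism. -/
def IsObj (e : Γ) : Prop := G.src e = e

open scoped Classical in
/-- Partial composition: `some (γδ)` when defined, `none` otherwise. -/
def mul? (γ δ : Γ) : Option Γ :=
  if h : G.src γ = G.tgt δ then some (G.comp γ δ h) else none

/-- The partial triple product `σ γ τ⁻¹`, `none` when undefined. -/
def conj? (σ γ τ : Γ) : Option Γ :=
  (G.mul? σ γ).bind fun η => G.mul? η (G.inv τ)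

end Gpd

/-- An object unital `Γ`-graded ring structure on the (possibly non-unital) ring `R`:
a decomposition `R = ⊕ R_γ` with `R_γ R_δ ⊆ R_{γδ}` (zero when `γδ` is undefined),
together with local units `1_e ∈ R_e` for the objects `e` such that
`1_{r(γ)} a = a 1_{d(γ)} = a` for homogeneous `a` of degree `γ`. -/
structure GammaRing {Γ : Type u} (G : Gpd Γ) (R : Type v) [NonUnitalRing R] where
  grade : Γ → AddSubgroup R
  grade_iSup : (⨆ γ : Γ, grade γ) = ⊤
  grade_indep : ∀ γ : Γ, grade γ ⊓ (⨆ (δ : Γ) (_ : δ ≠ γ), grade δ) = ⊥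
  mul_mem : ∀ (γ δ : Γ) (h : G.src γ = G.tgt δ) (a b : R),
    a ∈ grade γ → b ∈ grade δ → a * b ∈ grade (G.comp γ δ h)
  mul_ne : ∀ (γ δ : Γ), G.src γ ≠ G.tgt δ → ∀ (a b : R),
    a ∈ grade γ → b ∈ grade δ → a * b = 0
  one : Γ → R
  one_mem : ∀ e : Γ, G.IsObj e → one e ∈ grade e
  one_mul' : ∀ (γ : Γ) (a : R), a ∈ grade γ → one (G.tgt γ) * a = a
  mul_one' : ∀ (γ : Γ) (a : R), a ∈ grade γ → a * one (G.src γ) = a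

/-- A (unital) `Γ`-graded right module over the object unital `Γ`-graded ring `RG`. -/
structure GammaMod {Γ : Type u} {G : Gpd Γ} {R : Type v} [NonUnitalRing R]
    (RG : GammaRing G R) (M : Type w) [AddCommGroup M] where
  smul : M → R → M
  smul_add : ∀ (m : M) (a b : R), smul m (a + b) = smul m a + smul m b
  add_smul : ∀ (m n : M) (a : R), smul (m + n) a = smul m a + smul n a
  smul_mul : ∀ (m : M) (a b : R), smul m (a * b) = smul (smul m a) b
  grade : Γ → AddSubgroup M
  grade_iSup : (⨆ γ : Γ, grade γ) = ⊤
  grade_indep : ∀ γ : Γ, grade γ ⊓ (⨆ (δ : Γ) (_ : δ ≠ γ), grade δ) = ⊥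
  smul_mem : ∀ (σ τ : Γ) (h : G.src σ = G.tgt τ) (m : M) (a : R),
    m ∈ grade σ → a ∈ RG.grade τ → smul m a ∈ grade (G.comp σ τ h)
  smul_ne : ∀ (σ τ : Γ), G.src σ ≠ G.tgt τ → ∀ (m : M) (a : R),
    m ∈ grade σ → a ∈ RG.grade τ → smul m a = 0
  smul_one : ∀ (σ : Γ) (m : M), m ∈ grade σ → smul m (RG.one (G.src σ)) = m

/-- A (unital) `Γ`-graded left module over the object unital `Γ`-graded ring `RG`. -/
structure GammaLMod {Γ : Type u} {G : Gpd Γ} {R : Type v} [NonUnitalRing R]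
    (RG : GammaRing G R) (M : Type w) [AddCommGroup M] where
  smul : R → M → M
  smul_add : ∀ (a : R) (m n : M), smul a (m + n) = smul a m + smul a n
  add_smul : ∀ (a b : R) (m : M), smul (a + b) m = smul a m + smul b m
  mul_smul : ∀ (a b : R) (m : M), smul (a * b) m = smul a (smul b m)
  grade : Γ → AddSubgroup M
  grade_iSup : (⨆ γ : Γ, grade γ) = ⊤
  grade_indep : ∀ γ : Γ, grade γ ⊓ (⨆ (δ : Γ) (_ : δ ≠ γ), grade δ) = ⊥
  smul_mem : ∀ (τ σ : Γ) (h : G.src τ = G.tgt σ) (a : R) (m : M),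
    a ∈ RG.grade τ → m ∈ grade σ → smul a m ∈ grade (G.comp τ σ h)
  smul_ne : ∀ (τ σ : Γ), G.src τ ≠ G.tgt σ → ∀ (a : R) (m : M),
    a ∈ RG.grade τ → m ∈ grade σ → smul a m = 0
  one_smul : ∀ (σ : Γ) (m : M), m ∈ grade σ → smul (RG.one (G.tgt σ)) m = m

namespace GammaMod

variable {Γ : Type u} {G : Gpd Γ} {R : Type v} [NonUnitalRing R] {RG : GammaRing G R}
  {M : Type w} [AddCommGroup M] (Mod : GammaMod RG M)

/-- `shiftGrade σ γ` is the homogeneous component `M_{σγ}` (zero when undefined):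
the degree-`γ` component of the shifted module `M(σ)`. -/
def shiftGrade (σ γ : Γ) : AddSubgroup M := (G.mul? σ γ).elim ⊥ Mod.grade

/-- `N` is a graded submodule of `M`. -/
def IsGradedSub (N : AddSubgroup M) : Prop :=
  (∀ m ∈ N, ∀ a : R, Mod.smul m a ∈ N) ∧ N ≤ ⨆ γ : Γ, (Mod.grade γ ⊓ N)

/-- `N` is a gr-simple graded submodule of `M`. -/
def IsGrSimpleSub (N : AddSubgroup M) : Prop :=
  Mod.IsGradedSub N ∧ N ≠ ⊥ ∧
    ∀ P : AddSubgroup M, Mod.IsGradedSub P → P ≤ N → P = ⊥ ∨ P = N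

/-- `M` is a gr-simple graded module. -/
def IsGrSimple : Prop := Mod.IsGrSimpleSub ⊤

/-- `M` is a gr-semisimple graded module: it is the sum of its gr-simple graded
submodules. -/
def IsGrSemisimple : Prop :=
  (⨆ (N : AddSubgroup M) (_ : Mod.IsGrSimpleSub N), N) = ⊤

/-- The submodule `M(e) = ⊕_{r(γ) = e} M_γ`. -/
def eComp (e : Γ) : AddSubgroup M := ⨆ (γ : Γ) (_ : G.tgt γ = e), Mod.grade γ

/-- `M` is `Γ₀`-artinian: each `M(e)` satisfies the descending chain condition on
graded submodules. -/
def IsGamma0Artinian : Prop :=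
  ∀ e : Γ, G.IsObj e → ∀ f : ℕ → AddSubgroup M,
    (∀ n, Mod.IsGradedSub (f n) ∧ f n ≤ Mod.eComp e) →
    (∀ n, f (n + 1) ≤ f n) → ∃ n, ∀ k, n ≤ k → f k = f n

/-- `M` is a (nonzero) `Γ₀`-simple module: `M(e)` is gr-simple for every `e ∈ Γ'₀(M)`. -/
def IsGamma0Simple : Prop :=
  (∃ m : M, m ≠ 0) ∧
    ∀ e : Γ, G.IsObj e → Mod.eComp e ≠ ⊥ → Mod.IsGrSimpleSub (Mod.eComp e)

theorem isGradedSub_top : Mod.IsGradedSub (⊤ : AddSubgroup M) := by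
  constructor
  · intro m _ a
    exact AddSubgroup.mem_top _
  · have h : (⨆ γ : Γ, (Mod.grade γ ⊓ (⊤ : AddSubgroup M))) = (⊤ : AddSubgroup M) := by
      simp [Mod.grade_iSup]
    rw [h]

/-- `HomGrade γ` is the homogeneous component `HOM_R(M,M)_γ` of the graded
endomorphism ring `END_R(M)`: the `R`-linear additive endomorphisms `g` with
`g(M_σ) ⊆ M_{γσ}` for all `σ`. -/
def HomGrade (γ : Γ) : Set (M →+ M) :=
  {g | (∀ (m : M) (a : R), g (Mod.smul m a) = Mod.smul (g m) a) ∧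
       ∀ (σ : Γ) (m : M), m ∈ Mod.grade σ → g m ∈ Mod.shiftGrade γ σ}

/-- The graded submodule `N` of `M` is gr-isomorphic to a shift of the graded
submodule `N'` of `M₂`: there are `σ ∈ Γ` and a gr-isomorphism `N ≅ N'(σ)`. -/
def SubIso {M₂ : Type x} [AddCommGroup M₂] (Mod₂ : GammaMod RG M₂)
    (N : AddSubgroup M) (N' : AddSubgroup M₂) (hN : Mod.IsGradedSub N) : Prop :=
  ∃ (σ : Γ) (ψ : N ≃+ N'),
    (∀ (n : N) (a : R),
      ((ψ ⟨Mod.smul n.1 a, hN.1 n.1 n.2 a⟩ : N') : M₂) = Mod₂.smul ((ψ n : N') : M₂) a) ∧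
    ∀ γ : Γ, (fun n : N => ((ψ n : N') : M₂)) '' {n : N | (n : M) ∈ Mod.grade γ}
      = {m : M₂ | m ∈ N' ∧ m ∈ Mod₂.shiftGrade σ γ}

variable {ι : Type y}

/-- A pseudo-linearly independent sequence of homogeneous elements. -/
def PseudoLI (β : ι → Γ) (v : ι → M) : Prop :=
  (∀ i, v i ∈ Mod.grade (β i) ∧ v i ≠ 0) ∧
  ∀ a : ι →₀ R, (∀ i, RG.one (G.src (β i)) * a i = a i) →
    (a.sum fun i r => Mod.smul (v i) r) = 0 → a = 0

/-- A pseudo-basis of `M`: a generating pseudo-linearly independent sequence of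
homogeneous elements. -/
def PseudoBasis (β : ι → Γ) (v : ι → M) : Prop :=
  Mod.PseudoLI β v ∧
    AddSubgroup.closure {m : M | ∃ (i : ι) (r : R), m = Mod.smul (v i) r} = ⊤

/-- `M` is pseudo-free: it has a pseudo-basis. -/
def PseudoFree : Prop :=
  ∃ (κ : Type (max u w)) (β : κ → Γ) (v : κ → M), Mod.PseudoBasis β v

end GammaMod

namespace GammaLMod

variable {Γ : Type u} {G : Gpd Γ} {R : Type v} [NonUnitalRing R] {RG : GammaRing G R}
  {M : Type w} [AddCommGroup M] (Mod : GammaLMod RG M)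

/-- `rshiftGrade σ γ` is the homogeneous component `M_{σγ}` (zero when undefined). -/
def rshiftGrade (σ γ : Γ) : AddSubgroup M := (G.mul? σ γ).elim ⊥ Mod.grade

/-- `N` is a graded left submodule of `M`. -/
def IsGradedSub (N : AddSubgroup M) : Prop :=
  (∀ m ∈ N, ∀ a : R, Mod.smul a m ∈ N) ∧ N ≤ ⨆ γ : Γ, (Mod.grade γ ⊓ N)

def IsGrSimpleSub (N : AddSubgroup M) : Prop :=
  Mod.IsGradedSub N ∧ N ≠ ⊥ ∧
    ∀ P : AddSubgroup M, Mod.IsGradedSub P → P ≤ N → P = ⊥ ∨ P = N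

def IsGrSimple : Prop := Mod.IsGrSimpleSub ⊤

def IsGrSemisimple : Prop :=
  (⨆ (N : AddSubgroup M) (_ : Mod.IsGrSimpleSub N), N) = ⊤

/-- The left submodule `(e)M = ⊕_{d(γ) = e} M_γ`. -/
def lComp (e : Γ) : AddSubgroup M := ⨆ (γ : Γ) (_ : G.src γ = e), Mod.grade γ

def IsGamma0Artinian : Prop :=
  ∀ e : Γ, G.IsObj e → ∀ f : ℕ → AddSubgroup M,
    (∀ n, Mod.IsGradedSub (f n) ∧ f n ≤ Mod.lComp e) →
    (∀ n, f (n + 1) ≤ f n) → ∃ n, ∀ k, n ≤ k → f k = f n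

/-- `V` has finite `Γ₀`-dimension: each `(e)V` has a finite pseudo-basis. -/
def FiniteGamma0Dim : Prop :=
  ∀ e : Γ, G.IsObj e → ∃ (n : ℕ) (γs : Fin n → Γ) (u : Fin n → M),
    (∀ i, G.src (γs i) = e ∧ u i ∈ Mod.grade (γs i) ∧ u i ≠ 0) ∧
    (∀ m ∈ Mod.lComp e,
      m ∈ AddSubgroup.closure {y : M | ∃ (i : Fin n) (a : R), y = Mod.smul a (u i)}) ∧
    ∀ a : Fin n → R, (∀ i, a i * RG.one (G.tgt (γs i)) = a i) →
      (∑ i, Mod.smul (a i) (u i)) = 0 → ∀ i, a i = 0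

end GammaLMod

namespace GammaRing

variable {Γ : Type u} {G : Gpd Γ} {R : Type v} [NonUnitalRing R] (RG : GammaRing G R)

/-- The (right) regular graded module `R_R`. -/
def regular : GammaMod RG R where
  smul := fun m a => m * a
  smul_add := fun m a b => mul_add m a b
  add_smul := fun m n a => add_mul m n a
  smul_mul := fun m a b => (mul_assoc m a b).symm
  grade := RG.grade
  grade_iSup := RG.grade_iSup
  grade_indep := RG.grade_indep
  smul_mem := RG.mul_mem
  smul_ne := RG.mul_ne
  smul_one := RG.mul_one'

/-- The left regular graded module `_R R`. -/
def leftRegular : GammaLMod RG R where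
  smul := fun a m => a * m
  smul_add := fun a m n => mul_add a m n
  add_smul := fun a b m => add_mul a b m
  mul_smul := fun a b m => mul_assoc a b m
  grade := RG.grade
  grade_iSup := RG.grade_iSup
  grade_indep := RG.grade_indep
  smul_mem := RG.mul_mem
  smul_ne := RG.mul_ne
  one_smul := RG.one_mul'

/-- `I` is a graded (two-sided) ideal of `R`. -/
def IsGradedIdeal (I : AddSubgroup R) : Prop :=
  (∀ a ∈ I, ∀ r : R, a * r ∈ I ∧ r * a ∈ I) ∧ I ≤ ⨆ γ : Γ, (RG.grade γ ⊓ I)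

/-- `R` is a gr-simple ring. -/
def IsGrSimpleRing : Prop :=
  (∃ a : R, a ≠ 0) ∧ ∀ I : AddSubgroup R, RG.IsGradedIdeal I → I = ⊥ ∨ I = ⊤

/-- `R` is a gr-prime ring. -/
def IsGrPrime : Prop :=
  (∃ a : R, a ≠ 0) ∧ ∀ I J : AddSubgroup R, RG.IsGradedIdeal I → RG.IsGradedIdeal J →
    I ≠ ⊥ → J ≠ ⊥ → ∃ a ∈ I, ∃ b ∈ J, a * b ≠ 0

/-- `R` is a `Γ`-graded division ring: `R ≠ 0` and every nonzero homogeneous element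
of degree `γ` has an inverse of degree `γ⁻¹`. -/
def IsGrDivision : Prop :=
  (∃ a : R, a ≠ 0) ∧ ∀ (γ : Γ) (a : R), a ∈ RG.grade γ → a ≠ 0 →
    ∃ b ∈ RG.grade (G.inv γ), a * b = RG.one (G.tgt γ) ∧ b * a = RG.one (G.src γ)

/-- `supp(R) ⊆ eΓe`. -/
def SuppLE (e : Γ) : Prop := ∀ γ : Γ, RG.grade γ ≠ ⊥ → G.src γ = e ∧ G.tgt γ = e

def IsRightGrSemisimple : Prop := RG.regular.IsGrSemisimple

def IsLeftGrSemisimple : Prop := RG.leftRegular.IsGrSemisimple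

def IsRightGamma0Artinian : Prop := RG.regular.IsGamma0Artinian

def IsLeftGamma0Artinian : Prop := RG.leftRegular.IsGamma0Artinian

/-- The component ring `R_e` is a division ring with identity `1_e`. -/
def ComponentDivisionRing (e : Γ) : Prop :=
  RG.one e ≠ 0 ∧ ∀ a ∈ RG.grade e, a ≠ 0 →
    ∃ b ∈ RG.grade e, a * b = RG.one e ∧ b * a = RG.one e

/-- The additive subgroup `N` of `R` is, with the induced structure, a gr-simple
graded ring. -/
def SubringGrSimple (N : AddSubgroup R) : Prop :=
  N ≠ ⊥ ∧ ∀ P : AddSubgroup R,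
    (P ≤ N ∧ (∀ p ∈ P, ∀ n ∈ N, p * n ∈ P ∧ n * p ∈ P) ∧
      P ≤ ⨆ γ : Γ, (RG.grade γ ⊓ P)) →
    P = ⊥ ∨ P = N

/-- The additive subgroup `N` of `R` is, with the induced structure, a gr-prime
graded ring. -/
def SubringGrPrime (N : AddSubgroup R) : Prop :=
  (∃ a ∈ N, a ≠ 0) ∧ ∀ P Q : AddSubgroup R,
    (P ≤ N ∧ (∀ p ∈ P, ∀ n ∈ N, p * n ∈ P ∧ n * p ∈ P) ∧
      P ≤ ⨆ γ : Γ, (RG.grade γ ⊓ P)) →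
    (Q ≤ N ∧ (∀ q ∈ Q, ∀ n ∈ N, q * n ∈ Q ∧ n * q ∈ Q) ∧
      Q ≤ ⨆ γ : Γ, (RG.grade γ ⊓ Q)) →
    P ≠ ⊥ → Q ≠ ⊥ → ∃ p ∈ P, ∃ q ∈ Q, p * q ≠ 0

/-- The additive subgroup `N` of `R` is, with the induced structure, a graded
division ring. -/
def SubringGrDivision (N : AddSubgroup R) : Prop :=
  (∃ a ∈ N, a ≠ 0) ∧ ∀ (γ : Γ) (a : R), a ∈ RG.grade γ → a ∈ N → a ≠ 0 →
    RG.one (G.tgt γ) ∈ N ∧ RG.one (G.src γ) ∈ N ∧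
    ∃ b ∈ RG.grade (G.inv γ), b ∈ N ∧ a * b = RG.one (G.tgt γ) ∧ b * a = RG.one (G.src γ)

/-- The additive subgroup `N` of `R` is, with the induced structure, a right
`Γ₀`-artinian graded ring. -/
def SubringRightGamma0Artinian (N : AddSubgroup R) : Prop :=
  ∀ e : Γ, G.IsObj e → ∀ f : ℕ → AddSubgroup R,
    (∀ n, f n ≤ N ⊓ RG.regular.eComp e ∧ (∀ p ∈ f n, ∀ x ∈ N, p * x ∈ f n) ∧
      f n ≤ ⨆ γ : Γ, (RG.grade γ ⊓ f n)) →
    (∀ n, f (n + 1) ≤ f n) → ∃ n, ∀ k, n ≤ k → f k = f n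

end GammaRing

/-- A bundled object unital `Γ`-graded ring. -/
structure BRing.{u', v'} {Γ : Type u'} (G : Gpd Γ) where
  carrier : Type v'
  [ring : NonUnitalRing carrier]
  str : GammaRing G carrier

attribute [instance] BRing.ring

/-- A bundled `Γ`-graded right module over `RG`. -/
structure BMod.{u', v', w'} {Γ : Type u'} {G : Gpd Γ} {R : Type v'} [NonUnitalRing R]
    (RG : GammaRing G R) where
  carrier : Type w'
  [acg : AddCommGroup carrier]
  str : GammaMod RG carrier

attribute [instance] BMod.acg

/-- Two bundled graded modules are in the same isoshift class. -/
def BModSameClass {Γ : Type u} {G : Gpd Γ} {R : Type v} [NonUnitalRing R]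
    {RG : GammaRing G R} (S T : BMod.{u, v, w} RG) : Prop :=
  S.str.SubIso T.str ⊤ ⊤ S.str.isGradedSub_top

/-- The isoshiftical component of `R` of the type of the graded module `S`:
the sum of all graded right ideals of `R` which are gr-simple and lie in the
isoshift class of `S`. -/
def GammaRing.isoComponent {Γ : Type u} {G : Gpd Γ} {R : Type v} [NonUnitalRing R]
    (RG : GammaRing G R) (S : BMod.{u, v, w} RG) : AddSubgroup R :=
  ⨆ (N : AddSubgroup R) (_ : RG.regular.IsGrSimpleSub N ∧
      ∃ hN : RG.regular.IsGradedSub N, RG.regular.SubIso S.str N ⊤ hN), N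

/-- `R` is a pseudo-free module ring: every `Γ`-graded right `R`-module is
pseudo-free. -/
def GammaRing.IsPfm.{u', v', w'} {Γ : Type u'} {G : Gpd Γ} {R : Type v'}
    [NonUnitalRing R] (RG : GammaRing G R) : Prop :=
  ∀ S : BMod.{u', v', w'} RG, S.str.PseudoFree

/-- `R` has invariant pseudo-basis number: any two pseudo-bases of a finitely
generated pseudo-free graded module have the same number of elements. -/
def GammaRing.IPBN.{u', v', w'} {Γ : Type u'} {G : Gpd Γ} {R : Type v'}
    [NonUnitalRing R] (RG : GammaRing G R) : Prop :=
  ∀ (S : BMod.{u', v', w'} RG) (m n : ℕ) (β₁ : Fin m → Γ) (v₁ : Fin m → S.carrier)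
    (β₂ : Fin n → Γ) (v₂ : Fin n → S.carrier),
    S.str.PseudoBasis β₁ v₁ → S.str.PseudoBasis β₂ v₂ → m = n

/-- A `d`-finite sequence of elements of `eΓ`. -/
def DFiniteSeq {Γ : Type u} (G : Gpd Γ) {I : Type w} (e : Γ) (σ : I → Γ) : Prop :=
  (∀ i, G.tgt (σ i) = e) ∧ ∀ f : Γ, {i : I | G.src (σ i) = f}.Finite

/-- The degree-`γ` constraint on the `(i,j)` entry of a homogeneous matrix:
the component `D_{σ_i γ σ_j⁻¹}` (zero when the product is undefined). -/
def entryGrade {Γ : Type u} (G : Gpd Γ) {D : Type v} [NonUnitalRing D]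
    (DG : GammaRing G D) {I : Type w} (σ : I → Γ) (γ : Γ) (i j : I) : AddSubgroup D :=
  (G.conj? (σ i) γ (σ j)).elim ⊥ DG.grade

/-- The `(i,j)` entry of the product of two finitely supported matrices. -/
def matMulEntry {I : Type w} {D : Type v} [NonUnitalRing D]
    (A B : I →₀ I →₀ D) (i j : I) : D :=
  (A i).sum fun k a => a * B k j

/-- `R` is gr-isomorphic to the graded matrix ring `M_I(D)(σ̄)`: there is an
injective additive map from `R` to the finitely supported `I×I` matrices over `D`
which respects matrix multiplication and maps the homogeneous component `R_γ` onto
the set of homogeneous matrices of degree `γ`. -/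
def GammaRing.GrRepMatrix {Γ : Type u} {G : Gpd Γ} {R : Type v} {D : Type x}
    [NonUnitalRing R] [NonUnitalRing D] (RG : GammaRing G R) (DG : GammaRing G D)
    {I : Type w} (σ : I → Γ) : Prop :=
  ∃ φ : R →+ (I →₀ I →₀ D), Function.Injective φ ∧
    (∀ (a b : R) (i j : I), φ (a * b) i j = matMulEntry (φ a) (φ b) i j) ∧
    ∀ γ : Γ, (fun r : R => φ r) '' (RG.grade γ : Set R)
      = {m : I →₀ I →₀ D | ∀ i j : I, m i j ∈ entryGrade G DG σ γ i j}

/-- Entry constraint for matrix rings indexed by a sequence of subsets of `Γ`: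
the component `D_{Σ_i γ Σ_j⁻¹}`. -/
def entryGradeSet {Γ : Type u} (G : Gpd Γ) {D : Type v} [NonUnitalRing D]
    (DG : GammaRing G D) {I : Type w} (Sig : I → Set Γ) (γ : Γ) (i j : I) :
    AddSubgroup D :=
  ⨆ (σ : Γ) (_ : σ ∈ Sig i) (τ : Γ) (_ : τ ∈ Sig j), (G.conj? σ γ τ).elim ⊥ DG.grade

/-- `R` is gr-isomorphic to the graded matrix ring `M_I(D)(Σ̄)` for a sequence of
subsets `Σ̄`. -/
def GammaRing.GrRepMatrixSet {Γ : Type u} {G : Gpd Γ} {R : Type v} {D : Type x}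
    [NonUnitalRing R] [NonUnitalRing D] (RG : GammaRing G R) (DG : GammaRing G D)
    {I : Type w} (Sig : I → Set Γ) : Prop :=
  ∃ φ : R →+ (I →₀ I →₀ D), Function.Injective φ ∧
    (∀ (a b : R) (i j : I), φ (a * b) i j = matMulEntry (φ a) (φ b) i j) ∧
    ∀ γ : Γ, (fun r : R => φ r) '' (RG.grade γ : Set R)
      = {m : I →₀ I →₀ D | ∀ i j : I, m i j ∈ entryGradeSet G DG Sig γ i j}

/-- The family of graded rings `Rj` is summable. -/
def SummableFam {Γ : Type u} {G : Gpd Γ} {J : Type w} (Rj : J → BRing.{u, x} G) : Prop :=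
  ∀ e : Γ, G.IsObj e → {j : J | (Rj j).str.grade e ≠ ⊥}.Finite

/-- `P` (with projections `π`) is the graded direct product `∏^gr_j R_j`. -/
def IsGradedProductB {Γ : Type u} {G : Gpd Γ} {J : Type w} (Rj : J → BRing.{u, x} G)
    {P : Type v} [NonUnitalRing P] (PG : GammaRing G P)
    (π : ∀ j, P →+ (Rj j).carrier) : Prop :=
  (∀ (j : J) (a b : P), π j (a * b) = π j a * π j b) ∧
  (∀ (j : J) (e : Γ), G.IsObj e → π j (PG.one e) = (Rj j).str.one e) ∧
  ∀ (γ : Γ) (xs : ∀ j, (Rj j).carrier), (∀ j, xs j ∈ (Rj j).str.grade γ) →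
    ∃! p : P, p ∈ PG.grade γ ∧ ∀ j, π j p = xs j

/-- `R` and `S` are gr-isomorphic graded rings. -/
def GrIso {Γ : Type u} {G : Gpd Γ} {R : Type v} {S : Type x}
    [NonUnitalRing R] [NonUnitalRing S] (RG : GammaRing G R) (SG : GammaRing G S) :
    Prop :=
  ∃ φ : R ≃+ S, (∀ a b : R, φ (a * b) = φ a * φ b) ∧
    (∀ e : Γ, G.IsObj e → φ (RG.one e) = SG.one e) ∧
    ∀ γ : Γ, (fun a : R => φ a) '' (RG.grade γ : Set R) = (SG.grade γ : Set S)

/-- The gr-primality relation: `1_e D 1_f ≠ 0`. -/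
def GrPrimRel {Γ : Type u} (G : Gpd Γ) {D : Type v} [NonUnitalRing D]
    (DG : GammaRing G D) (e f : Γ) : Prop :=
  ∃ x : D, DG.one e * x * DG.one f ≠ 0

/-- The graded ideal `D_{[e]}` attached to the `∼`-class of `e`. -/
def ClassIdeal {Γ : Type u} (G : Gpd Γ) {D : Type v} [NonUnitalRing D]
    (DG : GammaRing G D) (e : Γ) : AddSubgroup D :=
  ⨆ (γ : Γ) (_ : GrPrimRel G DG (G.tgt γ) e ∧ GrPrimRel G DG (G.src γ) e), DG.grade γ

end
universe u v w x y


namespace GrTfae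


section Decomp

variable {Γ : Type u} {R : Type v} [NonUnitalRing R]

/-- Total sum of a finsupp decomposition. -/
noncomputable def totalHom : (Γ →₀ R) →+ R := Finsupp.liftAddHom fun _ => AddMonoidHom.id R

lemma totalHom_single (γ : Γ) (x : R) : totalHom (Finsupp.single γ x) = x := by
  simp [totalHom]

lemma totalHom_apply (c : Γ →₀ R) : totalHom c = ∑ γ ∈ c.support, c γ := by
  simp [totalHom, Finsupp.sum]

variable (grade : Γ → AddSubgroup R)

lemma totalHom_mem (B : Γ → AddSubgroup R) {c : Γ →₀ R} (h : ∀ γ, c γ ∈ B γ) :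
    totalHom c ∈ ⨆ γ, B γ := by
  rw [totalHom_apply]
  exact sum_mem fun γ _ => AddSubgroup.mem_iSup_of_mem γ (h γ)

variable (hind : ∀ γ : Γ, grade γ ⊓ (⨆ (δ : Γ) (_ : δ ≠ γ), grade δ) = ⊥)

include hind in
lemma graded_eq_zero (c : Γ →₀ R) (hc : ∀ γ, c γ ∈ grade γ)
    (h : totalHom c = 0) : c = 0 := by
  classical
  ext γ₀
  simp only [Finsupp.coe_zero, Pi.zero_apply]
  by_cases hmem : γ₀ ∈ c.support
  · have hsum : ∑ γ ∈ c.support, c γ = 0 := by rw [← totalHom_apply, h]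
    have h2 : c γ₀ = -∑ γ ∈ c.support.erase γ₀, c γ := by
      rw [eq_neg_iff_add_eq_zero, Finset.add_sum_erase c.support c hmem]
      exact hsum
    have h3 : c γ₀ ∈ ⨆ (δ : Γ) (_ : δ ≠ γ₀), grade δ := by
      rw [h2]
      refine neg_mem (sum_mem fun γ hγ => ?_)
      exact AddSubgroup.mem_iSup_of_mem γ
        (AddSubgroup.mem_iSup_of_mem (Finset.ne_of_mem_erase hγ) (hc γ))
    have hb : c γ₀ ∈ (⊥ : AddSubgroup R) := by
      rw [← hind γ₀]; exact AddSubgroup.mem_inf.mpr ⟨hc γ₀, h3⟩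
    simpa using hb
  · exact Finsupp.notMem_support_iff.mp hmem

include hind in
lemma graded_unique {c d : Γ →₀ R} (hc : ∀ γ, c γ ∈ grade γ) (hd : ∀ γ, d γ ∈ grade γ)
    (h : totalHom c = totalHom d) : c = d := by
  have h0 : totalHom (c - d) = 0 := by rw [map_sub, h, sub_self]
  have hz := graded_eq_zero grade hind (c - d)
    (fun γ => by rw [Finsupp.sub_apply]; exact sub_mem (hc γ) (hd γ)) h0
  exact sub_eq_zero.mp hz

lemma exists_decomp (A : Γ → AddSubgroup R) {x : R} (hx : x ∈ ⨆ γ, A γ) :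
    ∃ c : Γ →₀ R, (∀ γ, c γ ∈ A γ) ∧ totalHom c = x := by
  classical
  refine AddSubgroup.iSup_induction A
    (C := fun x => ∃ c : Γ →₀ R, (∀ γ, c γ ∈ A γ) ∧ totalHom c = x) hx ?_ ?_ ?_
  · intro γ x hxγ
    refine ⟨Finsupp.single γ x, fun δ => ?_, totalHom_single γ x⟩
    rw [Finsupp.single_apply]
    split
    · next hh => exact hh ▸ hxγ
    · exact zero_mem _
  · exact ⟨0, fun γ => zero_mem _, map_zero _⟩
  · rintro x y ⟨c, hc, rfl⟩ ⟨d, hd, rfl⟩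
    exact ⟨c + d, fun γ => by rw [Finsupp.add_apply]; exact add_mem (hc γ) (hd γ),
      map_add _ _ _⟩

end Decomp

section GPsec

variable {Γ : Type u} {R : Type v} [NonUnitalRing R]
variable (grade : Γ → AddSubgroup R) (op : R → R → R)

/-- Abstract "graded submodule" predicate. -/
def GP (N : AddSubgroup R) : Prop :=
  (∀ m ∈ N, ∀ a : R, op m a ∈ N) ∧ N ≤ ⨆ γ : Γ, (grade γ ⊓ N)

variable (hop : ∀ m n a : R, op (m + n) a = op m a + op n a)

include hop in
lemma op_zero (a : R) : op 0 a = 0 := by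
  have h := hop 0 0 a
  rw [add_zero] at h
  exact (left_eq_add.mp h)

include hop in
lemma gp_bot : GP grade op ⊥ := by
  constructor
  · intro m hm a
    rw [AddSubgroup.mem_bot] at hm
    subst hm
    rw [AddSubgroup.mem_bot]
    exact op_zero op hop a
  · exact bot_le

lemma gp_decomp {N : AddSubgroup R} (hN : GP grade op N) {x : R} (hx : x ∈ N) :
    ∃ c : Γ →₀ R, (∀ γ, c γ ∈ grade γ ⊓ N) ∧ totalHom c = x :=
  exists_decomp (fun γ => grade γ ⊓ N) (hN.2 hx)

variable (hind : ∀ γ : Γ, grade γ ⊓ (⨆ (δ : Γ) (_ : δ ≠ γ), grade δ) = ⊥)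

include hind in
lemma gp_component_mem {N : AddSubgroup R} (hN : GP grade op N) {x : R} (hx : x ∈ N)
    {c : Γ →₀ R} (hc : ∀ γ, c γ ∈ grade γ) (hcx : totalHom c = x) :
    ∀ γ, c γ ∈ N := by
  obtain ⟨d, hd, hdx⟩ := gp_decomp grade op hN hx
  have hcd : c = d := graded_unique grade hind hc
    (fun γ => (AddSubgroup.mem_inf.mp (hd γ)).1) (by rw [hcx, hdx])
  intro γ
  rw [hcd]
  exact (AddSubgroup.mem_inf.mp (hd γ)).2

include hind in
lemma gp_inf {N P : AddSubgroup R} (hN : GP grade op N) (hP : GP grade op P) :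
    GP grade op (N ⊓ P) := by
  constructor
  · intro m hm a
    rw [AddSubgroup.mem_inf] at hm ⊢
    exact ⟨hN.1 m hm.1 a, hP.1 m hm.2 a⟩
  · intro x hx
    rw [AddSubgroup.mem_inf] at hx
    obtain ⟨c, hc, hcx⟩ := gp_decomp grade op hN hx.1
    have hcP := gp_component_mem grade op hind hP hx.2
      (fun γ => (AddSubgroup.mem_inf.mp (hc γ)).1) hcx
    rw [← hcx]
    refine totalHom_mem _ fun γ => ?_
    have h1 := AddSubgroup.mem_inf.mp (hc γ)
    exact AddSubgroup.mem_inf.mpr ⟨h1.1, AddSubgroup.mem_inf.mpr ⟨h1.2, hcP γ⟩⟩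

include hop in
lemma gp_iSup {ι : Sort w} (S : ι → AddSubgroup R) (h : ∀ i, GP grade op (S i)) :
    GP grade op (⨆ i, S i) := by
  constructor
  · intro m hm
    refine AddSubgroup.iSup_induction S (C := fun m => ∀ a : R, op m a ∈ ⨆ i, S i) hm ?_ ?_ ?_
    · intro i x hx a
      exact AddSubgroup.mem_iSup_of_mem i ((h i).1 x hx a)
    · intro a
      rw [op_zero op hop]
      exact zero_mem _
    · intro x y hx hy a
      rw [hop]
      exact add_mem (hx a) (hy a)
  · intro x hx
    refine AddSubgroup.iSup_induction S
      (C := fun x => x ∈ ⨆ γ : Γ, (grade γ ⊓ ⨆ i, S i)) hx ?_ ?_ ?_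
    · intro i x hxi
      obtain ⟨c, hc, hcx⟩ := gp_decomp grade op (h i) hxi
      rw [← hcx]
      refine totalHom_mem _ fun γ => ?_
      have h1 := AddSubgroup.mem_inf.mp (hc γ)
      exact AddSubgroup.mem_inf.mpr ⟨h1.1, AddSubgroup.mem_iSup_of_mem i h1.2⟩
    · exact zero_mem _
    · intro x y hx hy
      exact add_mem hx hy

include hop in
lemma gp_sup {N P : AddSubgroup R} (hN : GP grade op N) (hP : GP grade op P) :
    GP grade op (N ⊔ P) := by
  have h := gp_iSup grade op hop (fun b : Bool => if b then N else P)
    (by intro b; cases b <;> simpa)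
  have he : (⨆ b : Bool, if b then N else P) = N ⊔ P := by
    rw [iSup_bool_eq]
    simp
  rwa [he] at h

include hop in
lemma gp_finsetSup (s : Finset (AddSubgroup R)) (h : ∀ N ∈ s, GP grade op N) :
    GP grade op (s.sup id) := by
  classical
  induction s using Finset.induction_on with
  | empty => simpa using gp_bot grade op hop
  | @insert a t ha ih =>
    rw [Finset.sup_insert]
    exact gp_sup grade op hop (h a (Finset.mem_insert_self a t))
      (ih fun N hN => h N (Finset.mem_insert_of_mem hN))

end GPsec

section DCC

variable {A : Type v} [AddCommGroup A]

lemma modular_inf_sup {N N' C : AddSubgroup A} (h : N ≤ N') :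
    N' ⊓ (N ⊔ C) = N ⊔ (N' ⊓ C) := by
  apply le_antisymm
  · intro x hx
    rw [AddSubgroup.mem_inf] at hx
    obtain ⟨y, hy, z, hz, hyz⟩ := AddSubgroup.mem_sup.mp hx.2
    have hzN' : z ∈ N' := by
      have hz' : z = x - y := by rw [← hyz]; abel
      rw [hz']
      exact sub_mem hx.1 (h hy)
    exact AddSubgroup.mem_sup.mpr ⟨y, hy, z, AddSubgroup.mem_inf.mpr ⟨hzN', hz⟩, hyz⟩
  · exact sup_le (le_inf h le_sup_left) (le_inf inf_le_left (inf_le_right.trans le_sup_right))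

/-- Maximal size of a finite family `J ⊆ s` with `N ⊓ sup J = ⊥`. -/
noncomputable def mu (s : Finset (AddSubgroup A)) (N : AddSubgroup A) : ℕ :=
  sSup {n : ℕ | ∃ J : Finset (AddSubgroup A), J ⊆ s ∧ N ⊓ J.sup id = ⊥ ∧ J.card = n}

lemma mu_bdd (s : Finset (AddSubgroup A)) (N : AddSubgroup A) :
    BddAbove {n : ℕ | ∃ J : Finset (AddSubgroup A), J ⊆ s ∧ N ⊓ J.sup id = ⊥ ∧ J.card = n} := by
  refine ⟨s.card, ?_⟩
  rintro n ⟨J, hJ, _, rfl⟩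
  exact Finset.card_le_card hJ

lemma mu_ne (s : Finset (AddSubgroup A)) (N : AddSubgroup A) :
    (0 : ℕ) ∈ {n : ℕ | ∃ J : Finset (AddSubgroup A), J ⊆ s ∧ N ⊓ J.sup id = ⊥ ∧ J.card = n} :=
  ⟨∅, Finset.empty_subset s, by rw [Finset.sup_empty, inf_bot_eq], rfl⟩

lemma mu_spec (s : Finset (AddSubgroup A)) (N : AddSubgroup A) :
    ∃ J : Finset (AddSubgroup A), J ⊆ s ∧ N ⊓ J.sup id = ⊥ ∧ J.card = mu s N :=
  Nat.sSup_mem ⟨0, mu_ne s N⟩ (mu_bdd s N)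

lemma le_mu {s J : Finset (AddSubgroup A)} {N : AddSubgroup A}
    (hJs : J ⊆ s) (hbot : N ⊓ J.sup id = ⊥) : J.card ≤ mu s N :=
  le_csSup (mu_bdd s N) ⟨J, hJs, hbot, rfl⟩

lemma mu_le_card (s : Finset (AddSubgroup A)) (N : AddSubgroup A) : mu s N ≤ s.card :=
  csSup_le ⟨0, mu_ne s N⟩ (by rintro n ⟨J, hJ, _, rfl⟩; exact Finset.card_le_card hJ)

variable (GS : AddSubgroup A → Prop)

lemma gs_finsetSup (hbot : GS ⊥) (hsup : ∀ {N P}, GS N → GS P → GS (N ⊔ P))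
    {s : Finset (AddSubgroup A)} (hmem : ∀ N ∈ s, GS N) : GS (s.sup id) := by
  classical
  induction s using Finset.induction_on with
  | empty => simpa using hbot
  | @insert a t ha ih =>
    rw [Finset.sup_insert]
    exact hsup (hmem a (Finset.mem_insert_self a t))
      (ih fun N hN => hmem N (Finset.mem_insert_of_mem hN))

lemma mu_lt (hbot : GS ⊥) (hinf : ∀ {N P}, GS N → GS P → GS (N ⊓ P))
    (hsup : ∀ {N P}, GS N → GS P → GS (N ⊔ P))
    (s : Finset (AddSubgroup A))
    (hsimp : ∀ N ∈ s, GS N ∧ N ≠ ⊥ ∧ ∀ P, GS P → P ≤ N → P = ⊥ ∨ P = N)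
    {N N' : AddSubgroup A} (hN : GS N) (hle : N ≤ N') (hne : N ≠ N')
    (hN'le : N' ≤ s.sup id) : mu s N' < mu s N := by
  classical
  obtain ⟨J, hJs, hJbot, hJcard⟩ := mu_spec s N'
  by_cases hcase : ∀ S₀ ∈ s, (S₀ : AddSubgroup A) ≤ N ⊔ J.sup id
  · exfalso
    have hsle : s.sup id ≤ N ⊔ J.sup id := Finset.sup_le hcase
    have h2 : N' = N ⊔ (N' ⊓ J.sup id) := by
      rw [← modular_inf_sup hle]
      exact (inf_eq_left.mpr (hN'le.trans hsle)).symm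
    rw [hJbot, sup_bot_eq] at h2
    exact hne h2.symm
  · push_neg at hcase
    obtain ⟨S₀, hS₀s, hS₀⟩ := hcase
    obtain ⟨hgsS₀, hS₀bot, hS₀min⟩ := hsimp S₀ hS₀s
    have hGSJ : GS (J.sup id) := gs_finsetSup GS hbot @hsup (fun P hP => (hsimp P (hJs hP)).1)
    have hinter : S₀ ⊓ (N ⊔ J.sup id) = ⊥ := by
      rcases hS₀min _ (hinf hgsS₀ (hsup hN hGSJ)) inf_le_left with h | h
      · exact h
      · exact absurd (inf_eq_left.mp h) hS₀
    have hS₀J : S₀ ∉ J := by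
      intro hmem
      have hle1 : S₀ ≤ J.sup id := Finset.le_sup (f := id) hmem
      have : S₀ = ⊥ := by
        rw [← hinter]
        exact (inf_eq_left.mpr (hle1.trans le_sup_right)).symm
      exact hS₀bot this
    have hnew : N ⊓ (insert S₀ J).sup id = ⊥ := by
      rw [Finset.sup_insert]
      ext x
      simp only [AddSubgroup.mem_inf, AddSubgroup.mem_bot]
      constructor
      · rintro ⟨hxN, hxsup⟩
        obtain ⟨z, hz, yy, hy, hzy⟩ := AddSubgroup.mem_sup.mp hxsup
        have hzmem : z ∈ S₀ ⊓ (N ⊔ J.sup id) := by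
          refine AddSubgroup.mem_inf.mpr ⟨hz, ?_⟩
          have hzxy : z = x - yy := by rw [← hzy]; abel
          rw [hzxy]
          exact sub_mem (AddSubgroup.mem_sup_left hxN) (AddSubgroup.mem_sup_right hy)
        rw [hinter, AddSubgroup.mem_bot] at hzmem
        have hxy : x = yy := by rw [← hzy, hzmem, zero_add]
        have : x ∈ N' ⊓ J.sup id := AddSubgroup.mem_inf.mpr ⟨hle hxN, hxy ▸ hy⟩
        rw [hJbot, AddSubgroup.mem_bot] at this
        exact this
      · rintro rfl
        exact ⟨zero_mem _, zero_mem _⟩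
    have hcard : (insert S₀ J).card ≤ mu s N :=
      le_mu (Finset.insert_subset hS₀s hJs) hnew
    rw [Finset.card_insert_of_notMem hS₀J, hJcard] at hcard
    omega

lemma dcc_core (hbot : GS ⊥) (hinf : ∀ {N P}, GS N → GS P → GS (N ⊓ P))
    (hsup : ∀ {N P}, GS N → GS P → GS (N ⊔ P))
    (s : Finset (AddSubgroup A))
    (hsimp : ∀ N ∈ s, GS N ∧ N ≠ ⊥ ∧ ∀ P, GS P → P ≤ N → P = ⊥ ∨ P = N)
    (f : ℕ → AddSubgroup A) (hf : ∀ n, GS (f n) ∧ f n ≤ s.sup id)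
    (hdec : ∀ n, f (n + 1) ≤ f n) : ∃ n, ∀ k, n ≤ k → f k = f n := by
  have h2 : BddAbove (Set.range fun n => mu s (f n)) := by
    refine ⟨s.card, ?_⟩
    rintro _ ⟨n, rfl⟩
    exact mu_le_card s (f n)
  obtain ⟨n, hn⟩ := Nat.sSup_mem (s := Set.range fun n => mu s (f n)) ⟨_, ⟨0, rfl⟩⟩ h2
  have hmax : ∀ m, mu s (f m) ≤ mu s (f n) := by
    intro m
    calc mu s (f m) ≤ sSup (Set.range fun n => mu s (f n)) := le_csSup h2 ⟨m, rfl⟩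
    _ = mu s (f n) := hn.symm
  refine ⟨n, fun k hk => ?_⟩
  induction k with
  | zero =>
    have : n = 0 := Nat.le_zero.mp hk
    rw [this]
  | succ k ih =>
    rcases Nat.lt_or_ge n (k + 1) with h | h
    · have hfk := ih (Nat.lt_succ_iff.mp h)
      by_cases heq : f (k + 1) = f k
      · rw [heq, hfk]
      · exfalso
        have hlt : mu s (f k) < mu s (f (k + 1)) :=
          mu_lt GS hbot @hinf @hsup s hsimp (hf (k + 1)).1 (hdec k) heq (hf k).2
        have hle2 : mu s (f (k + 1)) ≤ mu s (f n) := hmax (k + 1)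
        rw [hfk] at hlt
        omega
    · have : n = k + 1 := le_antisymm hk h
      rw [this]

lemma minimal_of_dcc (E : AddSubgroup A) (hE : GS E) (hEbot : E ≠ ⊥)
    (dcc : ∀ f : ℕ → AddSubgroup A, (∀ n, GS (f n) ∧ f n ≤ E) → (∀ n, f (n + 1) ≤ f n) →
      ∃ n, ∀ k, n ≤ k → f k = f n) :
    ∃ N : AddSubgroup A, GS N ∧ N ≠ ⊥ ∧ N ≤ E ∧
      ∀ P, GS P → P ≤ N → P = ⊥ ∨ P = N := by
  by_contra hno
  push_neg at hno
  have hstep : ∀ t : {N : AddSubgroup A // GS N ∧ N ≠ ⊥ ∧ N ≤ E},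
      ∃ t' : {N : AddSubgroup A // GS N ∧ N ≠ ⊥ ∧ N ≤ E}, t'.1 ≤ t.1 ∧ t'.1 ≠ t.1 := by
    rintro ⟨N, hGS, hbot, hle⟩
    obtain ⟨P, hPGS, hPle, hPb, hPn⟩ := hno N hGS hbot hle
    exact ⟨⟨P, hPGS, hPb, hPle.trans hle⟩, hPle, hPn⟩
  choose next hnle hnne using hstep
  set g : ℕ → {N : AddSubgroup A // GS N ∧ N ≠ ⊥ ∧ N ≤ E} :=
    fun n => next^[n] ⟨E, hE, hEbot, le_rfl⟩ with hg
  have hgs : ∀ n, g (n + 1) = next (g n) := fun n => Function.iterate_succ_apply' next n _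
  obtain ⟨n, hn⟩ := dcc (fun n => (g n).1) (fun n => ⟨(g n).2.1, (g n).2.2.2⟩)
    (fun n => by show (g (n + 1)).1 ≤ (g n).1; rw [hgs]; exact hnle (g n))
  have h1 : (g (n + 1)).1 = (g n).1 := hn (n + 1) (Nat.le_succ n)
  apply hnne (g n)
  rw [← hgs]
  exact h1

end DCC

end GrTfae

section GpdLemmas

universe u' v'

variable {Γ : Type u'} (G : Gpd Γ)

lemma GrTfae.tgt_of_isObj {e : Γ} (he : G.IsObj e) : G.tgt e = e := by
  unfold Gpd.IsObj at he
  calc G.tgt e = G.tgt (G.src e) := by rw [he]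
  _ = G.src e := G.tgt_src e
  _ = e := he

lemma GrTfae.comp_congr_left {a b c : Γ} (hab : a = b) (h : G.src a = G.tgt c) :
    G.comp a c h = G.comp b c (hab ▸ h) := by cases hab; rfl

lemma GrTfae.comp_congr_mid {a b b' : Γ} (h : b = b') (hab : G.src a = G.tgt b) :
    G.comp a b hab = G.comp a b' (h ▸ hab) := by cases h; rfl

lemma GrTfae.comp_cancel_left {τ γ γ' : Γ} (h : G.src τ = G.tgt γ) (h' : G.src τ = G.tgt γ')
    (heq : G.comp τ γ h = G.comp τ γ' h') : γ = γ' := by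
  have key : ∀ (δ : Γ) (hδ : G.src τ = G.tgt δ)
      (hc : G.src (G.inv τ) = G.tgt (G.comp τ δ hδ)),
      G.comp (G.inv τ) (G.comp τ δ hδ) hc = δ := by
    intro δ hδ hc
    rw [← G.comp_assoc (G.inv τ) τ δ (G.src_inv τ) hδ]
    rw [GrTfae.comp_congr_left G (G.inv_comp τ), GrTfae.comp_congr_left G hδ]
    exact G.id_comp δ
  have hc1 : G.src (G.inv τ) = G.tgt (G.comp τ γ h) := by rw [G.src_inv, G.tgt_comp]
  have hc2 : G.src (G.inv τ) = G.tgt (G.comp τ γ' h') := by rw [G.src_inv, G.tgt_comp]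
  rw [← key γ h hc1, ← key γ' h' hc2]
  exact GrTfae.comp_congr_mid G heq hc1

lemma GrTfae.comp_cancel_right {τ γ γ' : Γ} (h : G.src γ = G.tgt τ) (h' : G.src γ' = G.tgt τ)
    (heq : G.comp γ τ h = G.comp γ' τ h') : γ = γ' := by
  have key : ∀ (δ : Γ) (hδ : G.src δ = G.tgt τ)
      (hc : G.src (G.comp δ τ hδ) = G.tgt (G.inv τ)),
      G.comp (G.comp δ τ hδ) (G.inv τ) hc = δ := by
    intro δ hδ hc
    rw [G.comp_assoc δ τ (G.inv τ) hδ (G.tgt_inv τ).symm]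
    rw [GrTfae.comp_congr_mid G (G.comp_inv τ), GrTfae.comp_congr_mid G hδ.symm]
    exact G.comp_id δ
  have hc1 : G.src (G.comp γ τ h) = G.tgt (G.inv τ) := by rw [G.src_comp, G.tgt_inv]
  have hc2 : G.src (G.comp γ' τ h') = G.tgt (G.inv τ) := by rw [G.src_comp, G.tgt_inv]
  rw [← key γ h hc1, ← key γ' h' hc2]
  exact GrTfae.comp_congr_left G heq hc1

end GpdLemmas

namespace GrTfae

section OpDefs
variable {R : Type v} [NonUnitalRing R]
def rop : R → R → R := fun m a => m * a
def lop : R → R → R := fun m a => a * m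
lemma rop_add (m n a : R) : rop (m + n) a = rop m a + rop n a := add_mul m n a
lemma lop_add (m n a : R) : lop (m + n) a = lop m a + lop n a := mul_add a m n
end OpDefs

section RightSide

variable {Γ : Type u} {G : Gpd Γ} {R : Type v} [NonUnitalRing R] (RG : GammaRing G R)

lemma right_gs (N : AddSubgroup R) : RG.regular.IsGradedSub N ↔ GP RG.grade rop N :=
  Iff.rfl

lemma iSup_simple_subtype (Simple : AddSubgroup R → Prop) :
    (⨆ (N : AddSubgroup R) (_ : Simple N), N)
      = ⨆ p : {N : AddSubgroup R // Simple N}, (p : AddSubgroup R) := by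
  apply le_antisymm
  · exact iSup₂_le fun N hN =>
      le_iSup (fun p : {N : AddSubgroup R // Simple N} => (p : AddSubgroup R)) ⟨N, hN⟩
  · exact iSup_le fun p =>
      le_iSup₂ (f := fun (N : AddSubgroup R) (_ : Simple N) => N) p.1 p.2

theorem right_minimal_to_semisimple (hs : RG.IsGrSimpleRing)
    (N₀ : AddSubgroup R) (h₀ : RG.regular.IsGrSimpleSub N₀) :
    RG.IsRightGrSemisimple := by
  classical
  set soc : AddSubgroup R :=
    ⨆ p : {N : AddSubgroup R // RG.regular.IsGrSimpleSub N}, (p : AddSubgroup R) with hsoc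
  have hsocGP : GP RG.grade rop soc :=
    gp_iSup RG.grade rop rop_add _ (fun p => p.2.1)
  -- key: homogeneous left multiplication maps simples into soc
  have key : ∀ (τ : Γ) (r : R), r ∈ RG.grade τ → ∀ N : AddSubgroup R,
      RG.regular.IsGrSimpleSub N → ∀ a ∈ N, r * a ∈ soc := by
    intro τ r hr N hN a ha
    set rN : AddSubgroup R := N.map (AddMonoidHom.mulLeft r) with hrN
    have hmem_rN : ∀ x : R, x ∈ rN ↔ ∃ n ∈ N, r * n = x := by
      intro x
      simp [hrN, AddSubgroup.mem_map]
    have hstab : ∀ m ∈ rN, ∀ s : R, m * s ∈ rN := by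
      intro m hm s
      obtain ⟨n, hn, rfl⟩ := (hmem_rN m).mp hm
      rw [mul_assoc]
      exact (hmem_rN _).mpr ⟨n * s, hN.1.1 n hn s, rfl⟩
    have hgraded : rN ≤ ⨆ γ : Γ, (RG.grade γ ⊓ rN) := by
      intro x hx
      obtain ⟨n, hn, rfl⟩ := (hmem_rN x).mp hx
      obtain ⟨c, hc, hcx⟩ := gp_decomp RG.grade rop hN.1 hn
      have hsum : r * n = ∑ γ ∈ c.support, r * c γ := by
        rw [← hcx, totalHom_apply, Finset.mul_sum]
      rw [hsum]
      refine sum_mem fun γ _ => ?_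
      by_cases hcomp : G.src τ = G.tgt γ
      · refine AddSubgroup.mem_iSup_of_mem (G.comp τ γ hcomp)
          (AddSubgroup.mem_inf.mpr ⟨?_, ?_⟩)
        · exact RG.mul_mem τ γ hcomp r (c γ) hr (AddSubgroup.mem_inf.mp (hc γ)).1
        · exact (hmem_rN _).mpr ⟨c γ, (AddSubgroup.mem_inf.mp (hc γ)).2, rfl⟩
      · rw [RG.mul_ne τ γ hcomp r (c γ) hr (AddSubgroup.mem_inf.mp (hc γ)).1]
        exact zero_mem _
    by_cases hbot : rN = ⊥
    · have hmem : r * a ∈ rN := (hmem_rN _).mpr ⟨a, ha, rfl⟩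
      rw [hbot, AddSubgroup.mem_bot] at hmem
      rw [hmem]
      exact zero_mem _
    · have hsimple : RG.regular.IsGrSimpleSub rN := by
        refine ⟨⟨hstab, hgraded⟩, hbot, ?_⟩
        intro P hPgs hPle
        by_cases hPbot : P = ⊥
        · exact Or.inl hPbot
        right
        have hP : GP RG.grade rop P := hPgs
        set Q : AddSubgroup R := N ⊓ P.comap (AddMonoidHom.mulLeft r) with hQdef
        have hmemQ : ∀ x : R, x ∈ Q ↔ x ∈ N ∧ r * x ∈ P := by
          intro x
          simp [hQdef, AddSubgroup.mem_inf, AddSubgroup.mem_comap]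
        have hQgs : GP RG.grade rop Q := by
          constructor
          · intro m hm s
            obtain ⟨hmN, hmP⟩ := (hmemQ m).mp hm
            refine (hmemQ _).mpr ⟨hN.1.1 m hmN s, ?_⟩
            show r * (m * s) ∈ P
            rw [← mul_assoc]
            exact hP.1 (r * m) hmP s
          · intro q hq
            obtain ⟨hqN, hqP⟩ := (hmemQ q).mp hq
            obtain ⟨c, hc, hcq⟩ := gp_decomp RG.grade rop hN.1 hqN
            set dg : Γ → Γ := fun γ => if h : G.src τ = G.tgt γ then G.comp τ γ h else γ
              with hdg
            set d : Γ →₀ R := ∑ γ ∈ c.support, Finsupp.single (dg γ) (r * c γ) with hd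
            have hd_apply : ∀ δ, d δ = ∑ γ ∈ c.support, if dg γ = δ then r * c γ else 0 := by
              intro δ
              rw [hd, Finsupp.finset_sum_apply]
              exact Finset.sum_congr rfl fun γ _ => Finsupp.single_apply
            have hr_zero : ∀ γ, ¬ G.src τ = G.tgt γ → r * c γ = 0 := fun γ hγ =>
              RG.mul_ne τ γ hγ r (c γ) hr (AddSubgroup.mem_inf.mp (hc γ)).1
            have hd_graded : ∀ δ, d δ ∈ RG.grade δ := by
              intro δ
              rw [hd_apply]
              refine sum_mem fun γ _ => ?_
              split
              · next hδ =>
                subst hδ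
                by_cases hγ : G.src τ = G.tgt γ
                · have hdgγ : dg γ = G.comp τ γ hγ := dif_pos hγ
                  rw [hdgγ]
                  exact RG.mul_mem τ γ hγ r (c γ) hr (AddSubgroup.mem_inf.mp (hc γ)).1
                · rw [hr_zero γ hγ]
                  exact zero_mem _
              · exact zero_mem _
            have hd_total : totalHom d = r * q := by
              rw [hd, map_sum, ← hcq, totalHom_apply, Finset.mul_sum]
              exact Finset.sum_congr rfl fun γ _ => totalHom_single _ _
            have hdP : ∀ δ, d δ ∈ P :=
              gp_component_mem RG.grade rop RG.grade_indep hP hqP hd_graded hd_total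
            rw [← hcq]
            refine totalHom_mem _ fun γ => ?_
            refine AddSubgroup.mem_inf.mpr ⟨(AddSubgroup.mem_inf.mp (hc γ)).1,
              (hmemQ _).mpr ⟨(AddSubgroup.mem_inf.mp (hc γ)).2, ?_⟩⟩
            by_cases hγ : G.src τ = G.tgt γ
            · by_cases hsupp : γ ∈ c.support
              · have hdval : d (dg γ) = r * c γ := by
                  rw [hd_apply]
                  rw [Finset.sum_eq_single γ]
                  · rw [if_pos rfl]
                  · intro γ' hγ' hne
                    by_cases hγ'def : G.src τ = G.tgt γ'
                    · rw [if_neg]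
                      intro hcontra
                      apply hne
                      have e1 : dg γ' = G.comp τ γ' hγ'def := dif_pos hγ'def
                      have e2 : dg γ = G.comp τ γ hγ := dif_pos hγ
                      exact comp_cancel_left G hγ'def hγ (by rw [← e1, ← e2, hcontra])
                    · simp [hr_zero γ' hγ'def]
                  · intro hγabs
                    exact absurd hsupp hγabs
                rw [← hdval]
                exact hdP (dg γ)
              · rw [Finsupp.notMem_support_iff.mp hsupp, mul_zero]
                exact zero_mem _
            · rw [hr_zero γ hγ]
              exact zero_mem _
        have hQne : Q ≠ ⊥ := by
          obtain ⟨p, hpP, hpne⟩ : ∃ p ∈ P, p ≠ 0 := by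
            by_contra hall
            push_neg at hall
            apply hPbot
            ext x
            simp only [AddSubgroup.mem_bot]
            exact ⟨fun h => hall x h, fun h => h ▸ zero_mem _⟩
          obtain ⟨n, hnN, hnp⟩ := (hmem_rN p).mp (hPle hpP)
          intro hQbot
          have hnQ : n ∈ Q := (hmemQ n).mpr ⟨hnN, by rw [hnp]; exact hpP⟩
          rw [hQbot, AddSubgroup.mem_bot] at hnQ
          apply hpne
          rw [← hnp, hnQ, mul_zero]
        have hQN : Q = N := by
          rcases hN.2.2 Q hQgs (fun x hx => ((hmemQ x).mp hx).1) with h | h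
          · exact absurd h hQne
          · exact h
        apply le_antisymm hPle
        intro x hx
        obtain ⟨n, hnN, rfl⟩ := (hmem_rN x).mp hx
        have hnQ : n ∈ Q := hQN ▸ hnN
        exact ((hmemQ n).mp hnQ).2
      have h1 : r * a ∈ rN := (hmem_rN _).mpr ⟨a, ha, rfl⟩
      have h2 : rN ≤ soc :=
        le_iSup (fun p : {N : AddSubgroup R // RG.regular.IsGrSimpleSub N} =>
          (p : AddSubgroup R)) ⟨rN, hsimple⟩
      exact h2 h1
  have hleft : ∀ a ∈ soc, ∀ r : R, r * a ∈ soc := by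
    intro a ha
    refine AddSubgroup.iSup_induction _ (C := fun a => ∀ r : R, r * a ∈ soc) ha ?_ ?_ ?_
    · rintro ⟨N, hN⟩ a haN r
      have hrtop : r ∈ ⨆ γ : Γ, RG.grade γ := by
        rw [RG.grade_iSup]; exact AddSubgroup.mem_top r
      refine AddSubgroup.iSup_induction _ (C := fun r => r * a ∈ soc) hrtop ?_ ?_ ?_
      · intro τ x hx
        exact key τ x hx N hN a haN
      · show (0 : R) * a ∈ soc
        rw [zero_mul]; exact zero_mem _
      · intro x y hx hy
        show (x + y) * a ∈ soc
        rw [add_mul]; exact add_mem hx hy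
    · intro r; show r * (0 : R) ∈ soc; rw [mul_zero]; exact zero_mem _
    · intro x y hx hy r
      show r * (x + y) ∈ soc
      rw [mul_add]; exact add_mem (hx r) (hy r)
  have hideal : RG.IsGradedIdeal soc :=
    ⟨fun a ha rr => ⟨hsocGP.1 a ha rr, hleft a ha rr⟩, hsocGP.2⟩
  rcases hs.2 soc hideal with h | h
  · exfalso
    apply h₀.2.1
    have hle : N₀ ≤ soc :=
      le_iSup (fun p : {N : AddSubgroup R // RG.regular.IsGrSimpleSub N} =>
        (p : AddSubgroup R)) ⟨N₀, h₀⟩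
    rw [h] at hle
    exact le_bot_iff.mp hle
  · show (⨆ (N : AddSubgroup R) (_ : RG.regular.IsGrSimpleSub N), N) = ⊤
    rw [iSup_simple_subtype]
    exact h

theorem right_semisimple_to_artinian (hss : RG.IsRightGrSemisimple) :
    RG.IsRightGamma0Artinian := by
  classical
  intro e he f hf hdec
  have hss' : (⨆ p : {N : AddSubgroup R // RG.regular.IsGrSimpleSub N},
      (p : AddSubgroup R)) = ⊤ := by
    rw [← iSup_simple_subtype (RG.regular.IsGrSimpleSub)]; exact hss
  have h1e : RG.one e ∈ ⨆ p : {N : AddSubgroup R // RG.regular.IsGrSimpleSub N},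
      (p : AddSubgroup R) := by
    rw [hss']; exact AddSubgroup.mem_top _
  have hfin : ∃ s : Finset (AddSubgroup R),
      (∀ N ∈ s, RG.regular.IsGrSimpleSub N) ∧ RG.one e ∈ s.sup id := by
    refine AddSubgroup.iSup_induction _ (C := fun x => ∃ s : Finset (AddSubgroup R),
      (∀ N ∈ s, RG.regular.IsGrSimpleSub N) ∧ x ∈ s.sup id) h1e ?_ ?_ ?_
    · rintro ⟨N, hN⟩ x hx
      exact ⟨{N}, by simpa using hN, by simpa [Finset.sup_singleton] using hx⟩
    · exact ⟨∅, by simp, by simp⟩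
    · rintro x y ⟨s, hs, hxs⟩ ⟨t, ht, hyt⟩
      refine ⟨s ∪ t, ?_, ?_⟩
      · intro N hN
        rcases Finset.mem_union.mp hN with h | h
        exacts [hs N h, ht N h]
      · have hst1 : s.sup id ≤ (s ∪ t).sup id := Finset.sup_mono Finset.subset_union_left
        have hst2 : t.sup id ≤ (s ∪ t).sup id := Finset.sup_mono Finset.subset_union_right
        exact add_mem (hst1 hxs) (hst2 hyt)
  obtain ⟨s, hsimp, h1s⟩ := hfin
  have hTgp : GP RG.grade rop (s.sup id) :=
    gp_finsetSup RG.grade rop rop_add s (fun N hN => (hsimp N hN).1)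
  have hone_mul : ∀ x ∈ RG.regular.eComp e, RG.one e * x = x := by
    intro x hx
    refine AddSubgroup.iSup_induction _ (C := fun x => RG.one e * x = x) hx ?_ ?_ ?_
    · intro γ x hx'
      by_cases hγe : G.tgt γ = e
      · rw [iSup_pos hγe] at hx'
        have h1 := RG.one_mul' γ x hx'
        rw [hγe] at h1
        show RG.one e * x = x
        exact h1
      · rw [iSup_neg hγe, AddSubgroup.mem_bot] at hx'
        show RG.one e * x = x
        rw [hx', mul_zero]
    · exact mul_zero _
    · intro x y hx hy
      show RG.one e * (x + y) = x + y
      rw [mul_add, hx, hy]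
  have hEle : RG.regular.eComp e ≤ s.sup id := by
    intro x hx
    rw [← hone_mul x hx]
    exact hTgp.1 (RG.one e) h1s x
  exact dcc_core (GP RG.grade rop) (gp_bot RG.grade rop rop_add)
    (fun h h' => gp_inf RG.grade rop RG.grade_indep h h')
    (fun h h' => gp_sup RG.grade rop rop_add h h')
    s (fun N hN => hsimp N hN)
    f (fun n => ⟨(hf n).1, (hf n).2.trans hEle⟩) hdec

theorem right_artinian_to_minimal (hs : RG.IsGrSimpleRing) (hart : RG.IsRightGamma0Artinian) :
    ∃ N : AddSubgroup R, RG.regular.IsGrSimpleSub N := by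
  classical
  obtain ⟨a, ha⟩ := hs.1
  have hatop : a ∈ ⨆ γ : Γ, RG.grade γ := by
    rw [RG.grade_iSup]; exact AddSubgroup.mem_top a
  obtain ⟨c, hc, hca⟩ := exists_decomp RG.grade hatop
  have hexγ : ∃ γ, c γ ≠ 0 := by
    by_contra hall
    push_neg at hall
    apply ha
    rw [← hca]
    have hc0 : c = 0 := Finsupp.ext hall
    rw [hc0, map_zero]
  obtain ⟨γ, hγne⟩ := hexγ
  have hobj : G.IsObj (G.tgt γ) := G.src_tgt γ
  have hEgp : GP RG.grade rop (RG.regular.eComp (G.tgt γ)) := by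
    constructor
    · intro m hm
      refine AddSubgroup.iSup_induction _
        (C := fun m => ∀ r : R, m * r ∈ RG.regular.eComp (G.tgt γ)) hm ?_ ?_ ?_
      · intro δ x hx r'
        by_cases hδe : G.tgt δ = G.tgt γ
        · rw [iSup_pos hδe] at hx
          have hrtop : r' ∈ ⨆ σ : Γ, RG.grade σ := by
            rw [RG.grade_iSup]; exact AddSubgroup.mem_top _
          refine AddSubgroup.iSup_induction _
            (C := fun r' => x * r' ∈ RG.regular.eComp (G.tgt γ)) hrtop ?_ ?_ ?_
          · intro σ yy hy
            by_cases hcomp : G.src δ = G.tgt σ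
            · have hmem := RG.mul_mem δ σ hcomp x yy hx hy
              have htgt : G.tgt (G.comp δ σ hcomp) = G.tgt γ := by
                rw [G.tgt_comp]; exact hδe
              exact AddSubgroup.mem_iSup_of_mem (G.comp δ σ hcomp)
                (by rw [iSup_pos htgt]; exact hmem)
            · rw [RG.mul_ne δ σ hcomp x yy hx hy]
              exact zero_mem _
          · show x * (0 : R) ∈ RG.regular.eComp (G.tgt γ)
            rw [mul_zero]; exact zero_mem _
          · intro u vv hu hv
            show x * (u + vv) ∈ RG.regular.eComp (G.tgt γ)
            rw [mul_add]; exact add_mem hu hv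
        · rw [iSup_neg hδe, AddSubgroup.mem_bot] at hx
          show x * r' ∈ RG.regular.eComp (G.tgt γ)
          rw [hx, zero_mul]; exact zero_mem _
      · intro r'
        show (0 : R) * r' ∈ RG.regular.eComp (G.tgt γ)
        rw [zero_mul]; exact zero_mem _
      · intro u vv hu hv r'
        show (u + vv) * r' ∈ RG.regular.eComp (G.tgt γ)
        rw [add_mul]; exact add_mem (hu r') (hv r')
    · intro x hx
      refine AddSubgroup.iSup_induction _
        (C := fun x => x ∈ ⨆ δ : Γ, (RG.grade δ ⊓ RG.regular.eComp (G.tgt γ))) hx ?_ ?_ ?_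
      · intro δ x hx'
        by_cases hδe : G.tgt δ = G.tgt γ
        · rw [iSup_pos hδe] at hx'
          exact AddSubgroup.mem_iSup_of_mem δ (AddSubgroup.mem_inf.mpr ⟨hx',
            AddSubgroup.mem_iSup_of_mem δ (by rw [iSup_pos hδe]; exact hx')⟩)
        · rw [iSup_neg hδe, AddSubgroup.mem_bot] at hx'
          show x ∈ ⨆ δ : Γ, (RG.grade δ ⊓ RG.regular.eComp (G.tgt γ))
          rw [hx']; exact zero_mem _
      · exact zero_mem _
      · intro u vv hu hv; exact add_mem hu hv
  have hEne : RG.regular.eComp (G.tgt γ) ≠ ⊥ := by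
    intro hEbot
    apply hγne
    have hmem : c γ ∈ RG.regular.eComp (G.tgt γ) :=
      AddSubgroup.mem_iSup_of_mem γ (by rw [iSup_pos rfl]; exact hc γ)
    rw [hEbot, AddSubgroup.mem_bot] at hmem
    exact hmem
  obtain ⟨N, hNgs, hNne, _, hNmin⟩ := minimal_of_dcc (GP RG.grade rop)
    (RG.regular.eComp (G.tgt γ)) hEgp hEne
    (fun f hf hdec => hart (G.tgt γ) hobj f (fun n => ⟨(hf n).1, (hf n).2⟩) hdec)
  exact ⟨N, hNgs, hNne, fun P hP hPle => hNmin P hP hPle⟩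

theorem right_semisimple_to_minimal (hs : RG.IsGrSimpleRing) (hss : RG.IsRightGrSemisimple) :
    ∃ N : AddSubgroup R, RG.regular.IsGrSimpleSub N := by
  by_contra hno
  push_neg at hno
  obtain ⟨a, ha⟩ := hs.1
  apply ha
  have htb : (⊤ : AddSubgroup R) = ⊥ := by
    rw [← hss]
    exact le_bot_iff.mp (iSup_le fun N => iSup_le fun hN => absurd hN (hno N))
  have hmem := AddSubgroup.mem_top a
  rw [htb, AddSubgroup.mem_bot] at hmem
  exact hmem

end RightSide
end GrTfae

namespace GrTfae
section LeftSide

variable {Γ : Type u} {G : Gpd Γ} {R : Type v} [NonUnitalRing R] (RG : GammaRing G R)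

lemma left_gs (N : AddSubgroup R) : RG.leftRegular.IsGradedSub N ↔ GP RG.grade lop N :=
  Iff.rfl

theorem left_minimal_to_semisimple (hs : RG.IsGrSimpleRing)
    (N₀ : AddSubgroup R) (h₀ : RG.leftRegular.IsGrSimpleSub N₀) :
    RG.IsLeftGrSemisimple := by
  classical
  set soc : AddSubgroup R :=
    ⨆ p : {N : AddSubgroup R // RG.leftRegular.IsGrSimpleSub N}, (p : AddSubgroup R) with hsoc
  have hsocGP : GP RG.grade lop soc :=
    gp_iSup RG.grade lop lop_add _ (fun p => p.2.1)
  have key : ∀ (τ : Γ) (r : R), r ∈ RG.grade τ → ∀ N : AddSubgroup R,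
      RG.leftRegular.IsGrSimpleSub N → ∀ a ∈ N, a * r ∈ soc := by
    intro τ r hr N hN a ha
    set rN : AddSubgroup R := N.map (AddMonoidHom.mulRight r) with hrN
    have hmem_rN : ∀ x : R, x ∈ rN ↔ ∃ n ∈ N, n * r = x := by
      intro x
      simp [hrN, AddSubgroup.mem_map]
    have hstab : ∀ m ∈ rN, ∀ s : R, s * m ∈ rN := by
      intro m hm s
      obtain ⟨n, hn, rfl⟩ := (hmem_rN m).mp hm
      rw [← mul_assoc]
      exact (hmem_rN _).mpr ⟨s * n, hN.1.1 n hn s, rfl⟩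
    have hgraded : rN ≤ ⨆ γ : Γ, (RG.grade γ ⊓ rN) := by
      intro x hx
      obtain ⟨n, hn, rfl⟩ := (hmem_rN x).mp hx
      obtain ⟨c, hc, hcx⟩ := gp_decomp RG.grade lop hN.1 hn
      have hsum : n * r = ∑ γ ∈ c.support, c γ * r := by
        rw [← hcx, totalHom_apply, Finset.sum_mul]
      rw [hsum]
      refine sum_mem fun γ _ => ?_
      by_cases hcomp : G.src γ = G.tgt τ
      · refine AddSubgroup.mem_iSup_of_mem (G.comp γ τ hcomp)
          (AddSubgroup.mem_inf.mpr ⟨?_, ?_⟩)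
        · exact RG.mul_mem γ τ hcomp (c γ) r (AddSubgroup.mem_inf.mp (hc γ)).1 hr
        · exact (hmem_rN _).mpr ⟨c γ, (AddSubgroup.mem_inf.mp (hc γ)).2, rfl⟩
      · rw [RG.mul_ne γ τ hcomp (c γ) r (AddSubgroup.mem_inf.mp (hc γ)).1 hr]
        exact zero_mem _
    by_cases hbot : rN = ⊥
    · have hmem : a * r ∈ rN := (hmem_rN _).mpr ⟨a, ha, rfl⟩
      rw [hbot, AddSubgroup.mem_bot] at hmem
      rw [hmem]
      exact zero_mem _
    · have hsimple : RG.leftRegular.IsGrSimpleSub rN := by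
        refine ⟨⟨hstab, hgraded⟩, hbot, ?_⟩
        intro P hPgs hPle
        by_cases hPbot : P = ⊥
        · exact Or.inl hPbot
        right
        have hP : GP RG.grade lop P := hPgs
        set Q : AddSubgroup R := N ⊓ P.comap (AddMonoidHom.mulRight r) with hQdef
        have hmemQ : ∀ x : R, x ∈ Q ↔ x ∈ N ∧ x * r ∈ P := by
          intro x
          simp [hQdef, AddSubgroup.mem_inf, AddSubgroup.mem_comap]
        have hQgs : GP RG.grade lop Q := by
          constructor
          · intro m hm s
            obtain ⟨hmN, hmP⟩ := (hmemQ m).mp hm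
            refine (hmemQ _).mpr ⟨hN.1.1 m hmN s, ?_⟩
            show (s * m) * r ∈ P
            rw [mul_assoc]
            exact hP.1 (m * r) hmP s
          · intro q hq
            obtain ⟨hqN, hqP⟩ := (hmemQ q).mp hq
            obtain ⟨c, hc, hcq⟩ := gp_decomp RG.grade lop hN.1 hqN
            set dg : Γ → Γ := fun γ => if h : G.src γ = G.tgt τ then G.comp γ τ h else γ
              with hdg
            set d : Γ →₀ R := ∑ γ ∈ c.support, Finsupp.single (dg γ) (c γ * r) with hd
            have hd_apply : ∀ δ, d δ = ∑ γ ∈ c.support, if dg γ = δ then c γ * r else 0 := by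
              intro δ
              rw [hd, Finsupp.finset_sum_apply]
              exact Finset.sum_congr rfl fun γ _ => Finsupp.single_apply
            have hr_zero : ∀ γ, ¬ G.src γ = G.tgt τ → c γ * r = 0 := fun γ hγ =>
              RG.mul_ne γ τ hγ (c γ) r (AddSubgroup.mem_inf.mp (hc γ)).1 hr
            have hd_graded : ∀ δ, d δ ∈ RG.grade δ := by
              intro δ
              rw [hd_apply]
              refine sum_mem fun γ _ => ?_
              split
              · next hδ =>
                subst hδ
                by_cases hγ : G.src γ = G.tgt τ
                · have hdgγ : dg γ = G.comp γ τ hγ := dif_pos hγ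
                  rw [hdgγ]
                  exact RG.mul_mem γ τ hγ (c γ) r (AddSubgroup.mem_inf.mp (hc γ)).1 hr
                · rw [hr_zero γ hγ]
                  exact zero_mem _
              · exact zero_mem _
            have hd_total : totalHom d = q * r := by
              rw [hd, map_sum, ← hcq, totalHom_apply, Finset.sum_mul]
              exact Finset.sum_congr rfl fun γ _ => totalHom_single _ _
            have hdP : ∀ δ, d δ ∈ P :=
              gp_component_mem RG.grade lop RG.grade_indep hP hqP hd_graded hd_total
            rw [← hcq]
            refine totalHom_mem _ fun γ => ?_
            refine AddSubgroup.mem_inf.mpr ⟨(AddSubgroup.mem_inf.mp (hc γ)).1,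
              (hmemQ _).mpr ⟨(AddSubgroup.mem_inf.mp (hc γ)).2, ?_⟩⟩
            by_cases hγ : G.src γ = G.tgt τ
            · by_cases hsupp : γ ∈ c.support
              · have hdval : d (dg γ) = c γ * r := by
                  rw [hd_apply]
                  rw [Finset.sum_eq_single γ]
                  · rw [if_pos rfl]
                  · intro γ' hγ' hne
                    by_cases hγ'def : G.src γ' = G.tgt τ
                    · rw [if_neg]
                      intro hcontra
                      apply hne
                      have e1 : dg γ' = G.comp γ' τ hγ'def := dif_pos hγ'def
                      have e2 : dg γ = G.comp γ τ hγ := dif_pos hγ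
                      exact comp_cancel_right G hγ'def hγ (by rw [← e1, ← e2, hcontra])
                    · simp [hr_zero γ' hγ'def]
                  · intro hγabs
                    exact absurd hsupp hγabs
                rw [← hdval]
                exact hdP (dg γ)
              · rw [Finsupp.notMem_support_iff.mp hsupp, zero_mul]
                exact zero_mem _
            · rw [hr_zero γ hγ]
              exact zero_mem _
        have hQne : Q ≠ ⊥ := by
          obtain ⟨p, hpP, hpne⟩ : ∃ p ∈ P, p ≠ 0 := by
            by_contra hall
            push_neg at hall
            apply hPbot
            ext x
            simp only [AddSubgroup.mem_bot]
            exact ⟨fun h => hall x h, fun h => h ▸ zero_mem _⟩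
          obtain ⟨n, hnN, hnp⟩ := (hmem_rN p).mp (hPle hpP)
          intro hQbot
          have hnQ : n ∈ Q := (hmemQ n).mpr ⟨hnN, by rw [hnp]; exact hpP⟩
          rw [hQbot, AddSubgroup.mem_bot] at hnQ
          apply hpne
          rw [← hnp, hnQ, zero_mul]
        have hQN : Q = N := by
          rcases hN.2.2 Q hQgs (fun x hx => ((hmemQ x).mp hx).1) with h | h
          · exact absurd h hQne
          · exact h
        apply le_antisymm hPle
        intro x hx
        obtain ⟨n, hnN, rfl⟩ := (hmem_rN x).mp hx
        have hnQ : n ∈ Q := hQN ▸ hnN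
        exact ((hmemQ n).mp hnQ).2
      have h1 : a * r ∈ rN := (hmem_rN _).mpr ⟨a, ha, rfl⟩
      have h2 : rN ≤ soc :=
        le_iSup (fun p : {N : AddSubgroup R // RG.leftRegular.IsGrSimpleSub N} =>
          (p : AddSubgroup R)) ⟨rN, hsimple⟩
      exact h2 h1
  have hright : ∀ a ∈ soc, ∀ r : R, a * r ∈ soc := by
    intro a ha
    refine AddSubgroup.iSup_induction _ (C := fun a => ∀ r : R, a * r ∈ soc) ha ?_ ?_ ?_
    · rintro ⟨N, hN⟩ a haN r
      have hrtop : r ∈ ⨆ γ : Γ, RG.grade γ := by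
        rw [RG.grade_iSup]; exact AddSubgroup.mem_top r
      refine AddSubgroup.iSup_induction _ (C := fun r => a * r ∈ soc) hrtop ?_ ?_ ?_
      · intro τ x hx
        exact key τ x hx N hN a haN
      · show a * (0 : R) ∈ soc
        rw [mul_zero]; exact zero_mem _
      · intro x y hx hy
        show a * (x + y) ∈ soc
        rw [mul_add]; exact add_mem hx hy
    · intro r; show (0 : R) * r ∈ soc; rw [zero_mul]; exact zero_mem _
    · intro x y hx hy r
      show (x + y) * r ∈ soc
      rw [add_mul]; exact add_mem (hx r) (hy r)
  have hideal : RG.IsGradedIdeal soc :=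
    ⟨fun a ha rr => ⟨hright a ha rr, hsocGP.1 a ha rr⟩, hsocGP.2⟩
  rcases hs.2 soc hideal with h | h
  · exfalso
    apply h₀.2.1
    have hle : N₀ ≤ soc :=
      le_iSup (fun p : {N : AddSubgroup R // RG.leftRegular.IsGrSimpleSub N} =>
        (p : AddSubgroup R)) ⟨N₀, h₀⟩
    rw [h] at hle
    exact le_bot_iff.mp hle
  · show (⨆ (N : AddSubgroup R) (_ : RG.leftRegular.IsGrSimpleSub N), N) = ⊤
    rw [iSup_simple_subtype]
    exact h

theorem left_semisimple_to_artinian (hss : RG.IsLeftGrSemisimple) :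
    RG.IsLeftGamma0Artinian := by
  classical
  intro e he f hf hdec
  have hss' : (⨆ p : {N : AddSubgroup R // RG.leftRegular.IsGrSimpleSub N},
      (p : AddSubgroup R)) = ⊤ := by
    rw [← iSup_simple_subtype (RG.leftRegular.IsGrSimpleSub)]; exact hss
  have h1e : RG.one e ∈ ⨆ p : {N : AddSubgroup R // RG.leftRegular.IsGrSimpleSub N},
      (p : AddSubgroup R) := by
    rw [hss']; exact AddSubgroup.mem_top _
  have hfin : ∃ s : Finset (AddSubgroup R),
      (∀ N ∈ s, RG.leftRegular.IsGrSimpleSub N) ∧ RG.one e ∈ s.sup id := by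
    refine AddSubgroup.iSup_induction _ (C := fun x => ∃ s : Finset (AddSubgroup R),
      (∀ N ∈ s, RG.leftRegular.IsGrSimpleSub N) ∧ x ∈ s.sup id) h1e ?_ ?_ ?_
    · rintro ⟨N, hN⟩ x hx
      exact ⟨{N}, by simpa using hN, by simpa [Finset.sup_singleton] using hx⟩
    · exact ⟨∅, by simp, by simp⟩
    · rintro x y ⟨s, hs, hxs⟩ ⟨t, ht, hyt⟩
      refine ⟨s ∪ t, ?_, ?_⟩
      · intro N hN
        rcases Finset.mem_union.mp hN with h | h
        exacts [hs N h, ht N h]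
      · have hst1 : s.sup id ≤ (s ∪ t).sup id := Finset.sup_mono Finset.subset_union_left
        have hst2 : t.sup id ≤ (s ∪ t).sup id := Finset.sup_mono Finset.subset_union_right
        exact add_mem (hst1 hxs) (hst2 hyt)
  obtain ⟨s, hsimp, h1s⟩ := hfin
  have hTgp : GP RG.grade lop (s.sup id) :=
    gp_finsetSup RG.grade lop lop_add s (fun N hN => (hsimp N hN).1)
  have hmul_one : ∀ x ∈ RG.leftRegular.lComp e, x * RG.one e = x := by
    intro x hx
    refine AddSubgroup.iSup_induction _ (C := fun x => x * RG.one e = x) hx ?_ ?_ ?_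
    · intro γ x hx'
      by_cases hγe : G.src γ = e
      · rw [iSup_pos hγe] at hx'
        have h1 := RG.mul_one' γ x hx'
        rw [hγe] at h1
        show x * RG.one e = x
        exact h1
      · rw [iSup_neg hγe, AddSubgroup.mem_bot] at hx'
        show x * RG.one e = x
        rw [hx', zero_mul]
    · exact zero_mul _
    · intro x y hx hy
      show (x + y) * RG.one e = x + y
      rw [add_mul, hx, hy]
  have hEle : RG.leftRegular.lComp e ≤ s.sup id := by
    intro x hx
    rw [← hmul_one x hx]
    exact hTgp.1 (RG.one e) h1s x
  exact dcc_core (GP RG.grade lop) (gp_bot RG.grade lop lop_add)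
    (fun h h' => gp_inf RG.grade lop RG.grade_indep h h')
    (fun h h' => gp_sup RG.grade lop lop_add h h')
    s (fun N hN => hsimp N hN)
    f (fun n => ⟨(hf n).1, (hf n).2.trans hEle⟩) hdec

theorem left_artinian_to_minimal (hs : RG.IsGrSimpleRing) (hart : RG.IsLeftGamma0Artinian) :
    ∃ N : AddSubgroup R, RG.leftRegular.IsGrSimpleSub N := by
  classical
  obtain ⟨a, ha⟩ := hs.1
  have hatop : a ∈ ⨆ γ : Γ, RG.grade γ := by
    rw [RG.grade_iSup]; exact AddSubgroup.mem_top a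
  obtain ⟨c, hc, hca⟩ := exists_decomp RG.grade hatop
  have hexγ : ∃ γ, c γ ≠ 0 := by
    by_contra hall
    push_neg at hall
    apply ha
    rw [← hca]
    have hc0 : c = 0 := Finsupp.ext hall
    rw [hc0, map_zero]
  obtain ⟨γ, hγne⟩ := hexγ
  have hobj : G.IsObj (G.src γ) := G.src_src γ
  have hEgp : GP RG.grade lop (RG.leftRegular.lComp (G.src γ)) := by
    constructor
    · intro m hm
      refine AddSubgroup.iSup_induction _
        (C := fun m => ∀ r : R, r * m ∈ RG.leftRegular.lComp (G.src γ)) hm ?_ ?_ ?_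
      · intro δ x hx r'
        by_cases hδe : G.src δ = G.src γ
        · rw [iSup_pos hδe] at hx
          have hrtop : r' ∈ ⨆ σ : Γ, RG.grade σ := by
            rw [RG.grade_iSup]; exact AddSubgroup.mem_top _
          refine AddSubgroup.iSup_induction _
            (C := fun r' => r' * x ∈ RG.leftRegular.lComp (G.src γ)) hrtop ?_ ?_ ?_
          · intro σ yy hy
            by_cases hcomp : G.src σ = G.tgt δ
            · have hmem := RG.mul_mem σ δ hcomp yy x hy hx
              have hsrc : G.src (G.comp σ δ hcomp) = G.src γ := by
                rw [G.src_comp]; exact hδe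
              exact AddSubgroup.mem_iSup_of_mem (G.comp σ δ hcomp)
                (by rw [iSup_pos hsrc]; exact hmem)
            · rw [RG.mul_ne σ δ hcomp yy x hy hx]
              exact zero_mem _
          · show (0 : R) * x ∈ RG.leftRegular.lComp (G.src γ)
            rw [zero_mul]; exact zero_mem _
          · intro u vv hu hv
            show (u + vv) * x ∈ RG.leftRegular.lComp (G.src γ)
            rw [add_mul]; exact add_mem hu hv
        · rw [iSup_neg hδe, AddSubgroup.mem_bot] at hx
          show r' * x ∈ RG.leftRegular.lComp (G.src γ)
          rw [hx, mul_zero]; exact zero_mem _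
      · intro r'
        show r' * (0 : R) ∈ RG.leftRegular.lComp (G.src γ)
        rw [mul_zero]; exact zero_mem _
      · intro u vv hu hv r'
        show r' * (u + vv) ∈ RG.leftRegular.lComp (G.src γ)
        rw [mul_add]; exact add_mem (hu r') (hv r')
    · intro x hx
      refine AddSubgroup.iSup_induction _
        (C := fun x => x ∈ ⨆ δ : Γ, (RG.grade δ ⊓ RG.leftRegular.lComp (G.src γ))) hx ?_ ?_ ?_
      · intro δ x hx'
        by_cases hδe : G.src δ = G.src γ
        · rw [iSup_pos hδe] at hx'
          exact AddSubgroup.mem_iSup_of_mem δ (AddSubgroup.mem_inf.mpr ⟨hx',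
            AddSubgroup.mem_iSup_of_mem δ (by rw [iSup_pos hδe]; exact hx')⟩)
        · rw [iSup_neg hδe, AddSubgroup.mem_bot] at hx'
          show x ∈ ⨆ δ : Γ, (RG.grade δ ⊓ RG.leftRegular.lComp (G.src γ))
          rw [hx']; exact zero_mem _
      · exact zero_mem _
      · intro u vv hu hv; exact add_mem hu hv
  have hEne : RG.leftRegular.lComp (G.src γ) ≠ ⊥ := by
    intro hEbot
    apply hγne
    have hmem : c γ ∈ RG.leftRegular.lComp (G.src γ) :=
      AddSubgroup.mem_iSup_of_mem γ (by rw [iSup_pos rfl]; exact hc γ)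
    rw [hEbot, AddSubgroup.mem_bot] at hmem
    exact hmem
  obtain ⟨N, hNgs, hNne, _, hNmin⟩ := minimal_of_dcc (GP RG.grade lop)
    (RG.leftRegular.lComp (G.src γ)) hEgp hEne
    (fun f hf hdec => hart (G.src γ) hobj f (fun n => ⟨(hf n).1, (hf n).2⟩) hdec)
  exact ⟨N, hNgs, hNne, fun P hP hPle => hNmin P hP hPle⟩

theorem left_semisimple_to_minimal (hs : RG.IsGrSimpleRing) (hss : RG.IsLeftGrSemisimple) :
    ∃ N : AddSubgroup R, RG.leftRegular.IsGrSimpleSub N := by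
  by_contra hno
  push_neg at hno
  obtain ⟨a, ha⟩ := hs.1
  apply ha
  have htb : (⊤ : AddSubgroup R) = ⊥ := by
    rw [← hss]
    exact le_bot_iff.mp (iSup_le fun N => iSup_le fun hN => absurd hN (hno N))
  have hmem := AddSubgroup.mem_top a
  rw [htb, AddSubgroup.mem_bot] at hmem
  exact hmem

end LeftSide
end GrTfae

/-- Let `R` be a gr-simple object unital `Γ`-graded ring.  The
following are equivalent: (1) `R` is right gr-semisimple; (2) `R` is right
`Γ₀`-artinian; (3) `R` has a minimal graded right ideal.  Moreover the
corresponding left-sided statements are also equivalent to each other. -/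
theorem grSimple_semisimple_artinian_minimal_tfae
    {Γ : Type u} (G : Gpd Γ) {R : Type v} [NonUnitalRing R] (RG : GammaRing G R)
    (hs : RG.IsGrSimpleRing) :
    ((RG.IsRightGrSemisimple ↔ RG.IsRightGamma0Artinian) ∧
      (RG.IsRightGrSemisimple ↔ ∃ N : AddSubgroup R, RG.regular.IsGrSimpleSub N)) ∧
    ((RG.IsLeftGrSemisimple ↔ RG.IsLeftGamma0Artinian) ∧
      (RG.IsLeftGrSemisimple ↔ ∃ N : AddSubgroup R, RG.leftRegular.IsGrSimpleSub N)) := by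
  refine ⟨⟨⟨fun h => GrTfae.right_semisimple_to_artinian RG h, fun h => ?_⟩,
      ⟨fun h => GrTfae.right_semisimple_to_minimal RG hs h, fun h => ?_⟩⟩,
    ⟨⟨fun h => GrTfae.left_semisimple_to_artinian RG h, fun h => ?_⟩,
      ⟨fun h => GrTfae.left_semisimple_to_minimal RG hs h, fun h => ?_⟩⟩⟩
  · obtain ⟨N, hN⟩ := GrTfae.right_artinian_to_minimal RG hs h
    exact GrTfae.right_minimal_to_semisimple RG hs N hN
  · obtain ⟨N, hN⟩ := h
    exact GrTfae.right_minimal_to_semisimple RG hs N hN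
  · obtain ⟨N, hN⟩ := GrTfae.left_artinian_to_minimal RG hs h
    exact GrTfae.left_minimal_to_semisimple RG hs N hN
  · obtain ⟨N, hN⟩ := h
    exact GrTfae.left_minimal_to_semisimple RG hs N hN
end

section
/- Let Γ be a groupoid, R an object unital Γ-graded ring, S a Γ₀-simple Γ-graded right R-module, and D := END_R(S). Then: (1) D is a gr-division ring; (2) for e, f ∈ Γ₀ with S(e) ≠ 0 and S(f) ≠ 0, there exists γ ∈ Γ with r(γ) = e, d(γ) = f and D_γ ≠ 0 if and only if S(e) and S(f) are in the same isoshift class; (3) D is gr-prime if and only if all the modules S(e) with S(e) ≠ 0 lie in a single isoshift class. -/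
set_option autoImplicit false

universe u v w x y
noncomputable section SchurDev

open DirectSum

namespace Gpd

variable {Γ : Type u} (G : Gpd Γ)

theorem comp_congr {γ γ' δ δ' : Γ} (hγ : γ = γ') (hδ : δ = δ') (h : G.src γ = G.tgt δ) :
    G.comp γ δ h = G.comp γ' δ' (by rw [← hγ, ← hδ]; exact h) := by
  subst hγ; subst hδ; rfl

theorem inv_comp_comp (γ δ : Γ) (h : G.src γ = G.tgt δ) :
    G.comp (G.inv γ) (G.comp γ δ h) (by rw [G.src_inv, G.tgt_comp]) = δ := by
  have h1 := G.comp_assoc (G.inv γ) γ δ (G.src_inv γ) h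
  have h2 : G.comp (G.comp (G.inv γ) γ (G.src_inv γ)) δ
      (by rw [G.src_comp]; exact h) = G.comp (G.src γ) δ (by rw [G.src_src]; exact h) :=
    G.comp_congr (G.inv_comp γ) rfl _
  have h3 : G.comp (G.src γ) δ (by rw [G.src_src]; exact h)
      = G.comp (G.tgt δ) δ (G.src_tgt δ) := G.comp_congr h rfl _
  rw [← h1, h2, h3, G.id_comp]

theorem comp_inv_comp (γ δ : Γ) (h : G.tgt γ = G.tgt δ) :
    G.comp γ (G.comp (G.inv γ) δ (by rw [G.src_inv]; exact h))
      (by rw [G.tgt_comp, G.tgt_inv]) = δ := by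
  have h1 := G.comp_assoc γ (G.inv γ) δ (G.tgt_inv γ).symm (by rw [G.src_inv]; exact h)
  have h2 : G.comp (G.comp γ (G.inv γ) (G.tgt_inv γ).symm) δ
      (by rw [G.src_comp, G.src_inv]; exact h) = G.comp (G.tgt γ) δ (by rw [G.src_tgt]; exact h) :=
    G.comp_congr (G.comp_inv γ) rfl _
  have h3 : G.comp (G.tgt γ) δ (by rw [G.src_tgt]; exact h)
      = G.comp (G.tgt δ) δ (G.src_tgt δ) := G.comp_congr h rfl _
  rw [← h1, h2, h3, G.id_comp]

theorem comp_cancel {γ δ δ' : Γ} (h : G.src γ = G.tgt δ) (h' : G.src γ = G.tgt δ')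
    (heq : G.comp γ δ h = G.comp γ δ' h') : δ = δ' := by
  have := G.comp_congr (γ := G.inv γ) rfl heq (by rw [G.src_inv, G.tgt_comp])
  rwa [G.inv_comp_comp, G.inv_comp_comp] at this

theorem isObj_src (γ : Γ) : G.IsObj (G.src γ) := G.src_src γ

theorem isObj_tgt (γ : Γ) : G.IsObj (G.tgt γ) := G.src_tgt γ

end Gpd

namespace GammaMod

variable {Γ : Type u} {G : Gpd Γ} {R : Type v} [NonUnitalRing R] {RG : GammaRing G R}
  {M : Type w} [AddCommGroup M] (Mod : GammaMod RG M)

/-- The homogeneous components as `ℤ`-submodules. -/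
def gradeSM (γ : Γ) : Submodule ℤ M := AddSubgroup.toIntSubmodule (Mod.grade γ)

theorem mem_gradeSM {γ : Γ} {m : M} : m ∈ Mod.gradeSM γ ↔ m ∈ Mod.grade γ := Iff.rfl

open scoped Classical in
theorem internal : DirectSum.IsInternal Mod.gradeSM := by
  rw [DirectSum.isInternal_submodule_iff_iSupIndep_and_iSup_eq_top]
  constructor
  · intro γ
    rw [disjoint_iff]
    have := Mod.grade_indep γ
    apply_fun AddSubgroup.toIntSubmodule at this
    simpa [gradeSM, map_iSup] using this
  · have := Mod.grade_iSup
    apply_fun AddSubgroup.toIntSubmodule at this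
    rw [show Mod.gradeSM = fun γ => AddSubgroup.toIntSubmodule (Mod.grade γ) from rfl]
    simpa [gradeSM, map_iSup] using this

open scoped Classical in
/-- The decomposition equivalence `⨁ γ, M_γ ≃ M`. -/
def decEquiv : (⨁ γ, Mod.gradeSM γ) ≃ₗ[ℤ] M :=
  LinearEquiv.ofBijective (DirectSum.coeLinearMap Mod.gradeSM) Mod.internal


open scoped Classical in
/-- The projection of `M` onto the component `M_γ`. -/
def piHom (γ : Γ) : M →+ M :=
  AddMonoidHom.mk' (fun m => (Mod.decEquiv.symm m γ : M)) (by
    intro a b; dsimp only; rw [map_add]; simp)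

theorem piHom_mem (γ : Γ) (m : M) : Mod.piHom γ m ∈ Mod.grade γ :=
  (Mod.decEquiv.symm m γ).2

open scoped Classical in
theorem dec_of {γ : Γ} {m : M} (hm : m ∈ Mod.grade γ) :
    Mod.decEquiv.symm m = DirectSum.of (fun γ => Mod.gradeSM γ) γ ⟨m, hm⟩ := by
  apply Mod.decEquiv.injective
  rw [LinearEquiv.apply_symm_apply]
  show m = DirectSum.coeLinearMap Mod.gradeSM (DirectSum.of (fun γ => Mod.gradeSM γ) γ ⟨m, hm⟩)
  rw [DirectSum.coeLinearMap_of]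

theorem pi_self {γ : Γ} {m : M} (hm : m ∈ Mod.grade γ) : Mod.piHom γ m = m := by
  show ((Mod.decEquiv.symm m) γ : M) = m
  classical
  rw [Mod.dec_of hm]
  erw [DirectSum.of_eq_same]

theorem pi_ne {γ δ : Γ} {m : M} (hm : m ∈ Mod.grade γ) (h : δ ≠ γ) : Mod.piHom δ m = 0 := by
  show ((Mod.decEquiv.symm m) δ : M) = 0
  classical
  rw [Mod.dec_of hm]
  have := DirectSum.of_eq_of_ne (β := fun γ => Mod.gradeSM γ) γ δ
    (⟨m, hm⟩ : Mod.gradeSM γ) h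
  exact congrArg Subtype.val this

open scoped Classical in
theorem sum_pi (m : M) : ∑ γ ∈ (Mod.decEquiv.symm m).support, Mod.piHom γ m = m := by
  conv_rhs => rw [← Mod.decEquiv.apply_symm_apply m]
  conv_rhs => rw [← DirectSum.sum_support_of (x := Mod.decEquiv.symm m)]
  rw [map_sum]
  apply Finset.sum_congr rfl
  intro γ _
  show _ = DirectSum.coeLinearMap Mod.gradeSM
    (DirectSum.of (fun i => Mod.gradeSM i) γ ((Mod.decEquiv.symm m) γ))
  rw [DirectSum.coeLinearMap_of]
  rfl

theorem hom_induction {C : M → Prop} (h0 : C 0) (hadd : ∀ a b, C a → C b → C (a + b))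
    (hhom : ∀ (γ : Γ) (m : M), m ∈ Mod.grade γ → C m) : ∀ m, C m := by
  classical
  intro m
  rw [← Mod.sum_pi m]
  exact Finset.sum_induction _ _ hadd h0 (fun γ _ => hhom γ _ (Mod.piHom_mem γ m))

theorem grade_le_eComp {γ e : Γ} (h : G.tgt γ = e) : Mod.grade γ ≤ Mod.eComp e :=
  le_iSup₂ (f := fun (γ : Γ) (_ : G.tgt γ = e) => Mod.grade γ) γ h

theorem pi_eComp_ne {e γ : Γ} {m : M} (he : m ∈ Mod.eComp e) (h : G.tgt γ ≠ e) :
    Mod.piHom γ m = 0 := by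
  revert m
  show ∀ m ∈ Mod.eComp e, m ∈ (Mod.piHom γ).ker
  rw [← SetLike.le_def, GammaMod.eComp]
  refine iSup_le fun δ => iSup_le fun hδ => fun m hm => ?_
  have : γ ≠ δ := fun hh => h (hh ▸ hδ)
  exact Mod.pi_ne hm this

theorem eComp_induction {e : Γ} {C : M → Prop} (h0 : C 0)
    (hadd : ∀ a b, C a → C b → C (a + b))
    (hhom : ∀ γ : Γ, G.tgt γ = e → ∀ m ∈ Mod.grade γ, C m) :
    ∀ m ∈ Mod.eComp e, C m := by
  classical
  intro m hm
  rw [← Mod.sum_pi m]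
  refine Finset.sum_induction _ _ hadd h0 ?_
  intro γ _
  by_cases h : G.tgt γ = e
  · exact hhom γ h _ (Mod.piHom_mem γ m)
  · rw [Mod.pi_eComp_ne hm h]; exact h0

theorem grade_eComp_eq_zero {e γ : Γ} {m : M} (h : G.tgt γ ≠ e) (hm : m ∈ Mod.grade γ)
    (he : m ∈ Mod.eComp e) : m = 0 := by
  rw [← Mod.pi_self hm]; exact Mod.pi_eComp_ne he h

theorem eComp_exists_ne {e : Γ} (h : Mod.eComp e ≠ ⊥) :
    ∃ (γ : Γ) (m : M), G.tgt γ = e ∧ m ∈ Mod.grade γ ∧ m ≠ 0 := by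
  classical
  have h' : ¬ ∀ x ∈ Mod.eComp e, x = 0 := fun hh => h (AddSubgroup.eq_bot_iff_forall _ |>.2 hh)
  push_neg at h'
  obtain ⟨x, hx, hxne⟩ := h'
  by_contra hcon
  push_neg at hcon
  apply hxne
  rw [← Mod.sum_pi x]
  apply Finset.sum_eq_zero
  intro γ _
  by_cases hγ : G.tgt γ = e
  · by_contra hne
    exact hne (hcon γ _ hγ (Mod.piHom_mem γ x))
  · exact Mod.pi_eComp_ne hx hγ

theorem sum_eq_zero_unique {ι : Type*} {s : Finset ι} {deg : ι → Γ} {c : ι → M}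
    (hinj : Set.InjOn deg s) (hc : ∀ i ∈ s, c i ∈ Mod.grade (deg i))
    (hsum : ∑ i ∈ s, c i = 0) : ∀ i ∈ s, c i = 0 := by
  intro i hi
  have h2 := congrArg (Mod.piHom (deg i)) hsum
  rw [map_sum, map_zero, Finset.sum_eq_single_of_mem i hi] at h2
  · rwa [Mod.pi_self (hc i hi)] at h2
  · intro j hj hne
    exact Mod.pi_ne (hc j hj) fun hdeg => hne (hinj hj hi hdeg.symm)

open scoped Classical in
/-- The projection of `M` onto `M(e)`. -/
def proj (e : Γ) : M →+ M :=
  (DirectSum.toAddMonoid (fun γ => if G.tgt γ = e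
      then ((Mod.gradeSM γ).subtype.toAddMonoidHom) else 0)).comp
    Mod.decEquiv.symm.toLinearMap.toAddMonoidHom

open scoped Classical in
theorem proj_of {e γ : Γ} {m : M} (hm : m ∈ Mod.grade γ) :
    Mod.proj e m = if G.tgt γ = e then m else 0 := by
  classical
  show (DirectSum.toAddMonoid _) (Mod.decEquiv.symm m) = _
  rw [Mod.dec_of hm]
  erw [DirectSum.toAddMonoid_of]
  by_cases h : G.tgt γ = e <;> simp [h]

theorem proj_mem (e : Γ) (m : M) : Mod.proj e m ∈ Mod.eComp e := by
  classical
  refine Mod.hom_induction (C := fun m => Mod.proj e m ∈ Mod.eComp e) ?_ ?_ ?_ m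
  · show Mod.proj e 0 ∈ _; rw [map_zero]; exact zero_mem _
  · intro a b ha hb; show Mod.proj e (a + b) ∈ _; rw [map_add]; exact add_mem ha hb
  · intro γ m hm
    show Mod.proj e m ∈ _
    rw [Mod.proj_of hm]
    by_cases h : G.tgt γ = e
    · rw [if_pos h]; exact Mod.grade_le_eComp h hm
    · rw [if_neg h]; exact zero_mem _

theorem proj_eq_self {e : Γ} {m : M} (hm : m ∈ Mod.eComp e) : Mod.proj e m = m := by
  classical
  refine Mod.eComp_induction (C := fun m => Mod.proj e m = m) ?_ ?_ ?_ m hm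
  · show Mod.proj e 0 = 0; rw [map_zero]
  · intro a b ha hb; show Mod.proj e (a + b) = a + b; rw [map_add, ha, hb]
  · intro γ hγ m hm; show Mod.proj e m = m; rw [Mod.proj_of hm, if_pos hγ]

theorem proj_vanish {e γ : Γ} {m : M} (hm : m ∈ Mod.grade γ) (h : G.tgt γ ≠ e) :
    Mod.proj e m = 0 := by classical rw [Mod.proj_of hm, if_neg h]

theorem smul_zero_left (a : R) : Mod.smul 0 a = 0 := by
  have h := Mod.add_smul 0 0 a
  rw [add_zero] at h
  exact add_eq_right.mp h.symm

theorem smul_zero_right (m : M) : Mod.smul m 0 = 0 := by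
  have h := Mod.smul_add m 0 0
  rw [add_zero] at h
  exact add_eq_right.mp h.symm

theorem smul_neg_left (m : M) (a : R) : Mod.smul (-m) a = - Mod.smul m a := by
  have h := Mod.add_smul m (-m) a
  rw [add_neg_cancel, Mod.smul_zero_left] at h
  exact eq_neg_of_add_eq_zero_right h.symm

theorem R_induction {C : R → Prop} (h0 : C 0) (hadd : ∀ a b, C a → C b → C (a + b))
    (hhom : ∀ (τ : Γ) (a : R), a ∈ RG.grade τ → C a) : ∀ a, C a := by
  intro a
  have ha : a ∈ (⊤ : AddSubgroup R) := trivial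
  rw [← RG.grade_iSup] at ha
  exact AddSubgroup.iSup_induction (C := C) _ ha (fun τ x hx => hhom τ x hx) h0 hadd



theorem shiftGrade_pos {σ' σ : Γ} (h : G.src σ' = G.tgt σ) :
    Mod.shiftGrade σ' σ = Mod.grade (G.comp σ' σ h) := by
  rw [GammaMod.shiftGrade, Gpd.mul?, dif_pos h, Option.elim]

theorem shiftGrade_neg {σ' σ : Γ} (h : G.src σ' ≠ G.tgt σ) :
    Mod.shiftGrade σ' σ = ⊥ := by
  rw [GammaMod.shiftGrade, Gpd.mul?, dif_neg h, Option.elim]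

theorem smul_mem_eComp {e : Γ} {m : M} (hm : m ∈ Mod.eComp e) (a : R) :
    Mod.smul m a ∈ Mod.eComp e := by
  revert a
  refine Mod.eComp_induction (C := fun m => ∀ a, Mod.smul m a ∈ Mod.eComp e) ?_ ?_ ?_ m hm
  · intro a; rw [Mod.smul_zero_left]; exact zero_mem _
  · intro x y hx hy a; rw [Mod.add_smul]; exact add_mem (hx a) (hy a)
  · intro σ hσ x hx
    refine R_induction (RG := RG) (C := fun a => Mod.smul x a ∈ Mod.eComp e) ?_ ?_ ?_
    · show Mod.smul x 0 ∈ _; rw [Mod.smul_zero_right]; exact zero_mem _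
    · intro a b ha hb; show Mod.smul x (a + b) ∈ _; rw [Mod.smul_add]; exact add_mem ha hb
    · intro τ a ha
      by_cases hc : G.src σ = G.tgt τ
      · exact Mod.grade_le_eComp (by rw [G.tgt_comp]; exact hσ)
          (Mod.smul_mem σ τ hc x a hx ha)
      · rw [Mod.smul_ne σ τ hc x a hx ha]; exact zero_mem _

section HomGrade

variable {γ : Γ} {g : M →+ M}

theorem hom_vanish (hg : g ∈ Mod.HomGrade γ) {σ : Γ} {m : M}
    (h : G.tgt σ ≠ G.src γ) (hm : m ∈ Mod.grade σ) : g m = 0 := by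
  have h2 := hg.2 σ m hm
  rw [Mod.shiftGrade_neg (fun hh => h hh.symm)] at h2
  exact h2

theorem hom_apply_mem (hg : g ∈ Mod.HomGrade γ) {σ : Γ} {m : M}
    (h : G.src γ = G.tgt σ) (hm : m ∈ Mod.grade σ) : g m ∈ Mod.grade (G.comp γ σ h) := by
  have h2 := hg.2 σ m hm
  rwa [Mod.shiftGrade_pos h] at h2

theorem hom_vanish_eComp (hg : g ∈ Mod.HomGrade γ) {e : Γ} (h : e ≠ G.src γ) :
    ∀ m ∈ Mod.eComp e, g m = 0 := by
  refine Mod.eComp_induction (C := fun m => g m = 0) (map_zero g) ?_ ?_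
  · intro a b ha hb; rw [map_add, ha, hb, add_zero]
  · intro δ hδ m hm; exact Mod.hom_vanish hg (hδ ▸ h) hm

theorem hom_mem_eComp (hg : g ∈ Mod.HomGrade γ) :
    ∀ m ∈ Mod.eComp (G.src γ), g m ∈ Mod.eComp (G.tgt γ) := by
  refine Mod.eComp_induction (C := fun m => g m ∈ Mod.eComp (G.tgt γ))
    (by show g 0 ∈ _; rw [map_zero]; exact zero_mem _) ?_ ?_
  · intro a b ha hb; rw [map_add]; exact add_mem ha hb
  · intro δ hδ m hm
    exact Mod.grade_le_eComp (G.tgt_comp γ δ hδ.symm)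
      (Mod.hom_apply_mem hg hδ.symm hm)

theorem hom_exists_witness (hg : g ∈ Mod.HomGrade γ) (hne : g ≠ 0) :
    ∃ (σ : Γ) (m : M), m ∈ Mod.grade σ ∧ G.tgt σ = G.src γ ∧ g m ≠ 0 ∧ m ≠ 0 := by
  have : ∃ (σ : Γ) (m : M), m ∈ Mod.grade σ ∧ g m ≠ 0 := by
    by_contra hcon
    push_neg at hcon
    apply hne
    ext m
    refine Mod.hom_induction (C := fun m => g m = (0 : M →+ M) m) ?_ ?_ ?_ m
    · show g 0 = (0 : M →+ M) 0; rw [map_zero, map_zero]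
    · intro a b ha hb; rw [map_add, map_add, ha, hb]
    · intro σ m hm; rw [hcon σ m hm]; rfl
  obtain ⟨σ, m, hm, hgm⟩ := this
  refine ⟨σ, m, hm, ?_, hgm, ?_⟩
  · by_contra h
    exact hgm (Mod.hom_vanish hg h hm)
  · rintro rfl
    exact hgm (map_zero g)

theorem proj_smul (e : Γ) (m : M) (a : R) :
    Mod.proj e (Mod.smul m a) = Mod.smul (Mod.proj e m) a := by
  classical
  revert a
  refine Mod.hom_induction
    (C := fun m => ∀ a, Mod.proj e (Mod.smul m a) = Mod.smul (Mod.proj e m) a) ?_ ?_ ?_ m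
  · intro a
    show Mod.proj e (Mod.smul 0 a) = Mod.smul (Mod.proj e 0) a
    rw [Mod.smul_zero_left, map_zero, Mod.smul_zero_left]
  · intro x y hx hy a
    rw [Mod.add_smul, map_add, hx, hy, map_add, Mod.add_smul]
  · intro σ x hx
    refine R_induction (RG := RG)
      (C := fun a => Mod.proj e (Mod.smul x a) = Mod.smul (Mod.proj e x) a) ?_ ?_ ?_
    · show Mod.proj e (Mod.smul x 0) = Mod.smul (Mod.proj e x) 0
      rw [Mod.smul_zero_right, map_zero, Mod.smul_zero_right]
    · intro a b ha hb
      show Mod.proj e (Mod.smul x (a + b)) = Mod.smul (Mod.proj e x) (a + b)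
      rw [Mod.smul_add, map_add, ha, hb, Mod.smul_add]
    · intro τ a ha
      by_cases hc : G.src σ = G.tgt τ
      · rw [Mod.proj_of (Mod.smul_mem σ τ hc x a hx ha), Mod.proj_of hx,
          G.tgt_comp]
        by_cases he : G.tgt σ = e
        · rw [if_pos he, if_pos he]
        · rw [if_neg he, if_neg he, Mod.smul_zero_left]
      · rw [Mod.smul_ne σ τ hc x a hx ha, map_zero, Mod.proj_of hx]
        by_cases he : G.tgt σ = e
        · rw [if_pos he, Mod.smul_ne σ τ hc x a hx ha]
        · rw [if_neg he, Mod.smul_zero_left]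

theorem proj_homGrade {e : Γ} (he : G.IsObj e) : Mod.proj e ∈ Mod.HomGrade e := by
  constructor
  · exact fun m a => Mod.proj_smul e m a
  · intro σ m hm
    by_cases h : G.tgt σ = e
    · have h' : G.src e = G.tgt σ := by rw [he, h]
      rw [Mod.shiftGrade_pos h']
      have hcomp : G.comp e σ h' = σ := by
        have h2 := G.comp_congr (show e = G.tgt σ from h.symm) rfl h'
        rw [h2, G.id_comp]
      rw [hcomp, Mod.proj_of hm, if_pos h]
      exact hm
    · have h' : G.src e ≠ G.tgt σ := by rw [he]; exact fun hh => h hh.symm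
      rw [Mod.shiftGrade_neg h', Mod.proj_of hm, if_neg h]
      exact AddSubgroup.mem_bot.mpr rfl

theorem proj_ne_zero {e : Γ} (h : Mod.eComp e ≠ ⊥) : Mod.proj e ≠ 0 := by
  obtain ⟨γ, m, hγ, hm, hne⟩ := Mod.eComp_exists_ne h
  intro h0
  apply hne
  have := congrArg (fun f : M →+ M => f m) h0
  simpa [Mod.proj_of hm, if_pos hγ] using this

theorem eComp_isGradedSub (e : Γ) : Mod.IsGradedSub (Mod.eComp e) := by
  constructor
  · exact fun m hm a => Mod.smul_mem_eComp hm a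
  · intro m hm
    classical
    rw [← Mod.sum_pi m]
    refine AddSubgroup.sum_mem _ ?_
    intro γ _
    by_cases h : G.tgt γ = e
    · refine le_iSup (fun γ => Mod.grade γ ⊓ Mod.eComp e) γ ?_
      exact ⟨Mod.piHom_mem γ m, Mod.grade_le_eComp h (Mod.piHom_mem γ m)⟩
    · rw [Mod.pi_eComp_ne hm h]; exact zero_mem _

end HomGrade


theorem ne_bot_of_mem {S : AddSubgroup M} {m : M} (hm : m ∈ S) (h : m ≠ 0) : S ≠ ⊥ :=
  fun hb => h (by rwa [hb, AddSubgroup.mem_bot] at hm)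

section Schur

variable (hs : Mod.IsGamma0Simple) {γ : Γ} {g : M →+ M}
  (hg : g ∈ Mod.HomGrade γ) (hne : g ≠ 0)

include hs hg hne

theorem schur_nonbot_src : Mod.eComp (G.src γ) ≠ ⊥ := by
  obtain ⟨σ, m, hm, hσ, _, hmne⟩ := Mod.hom_exists_witness hg hne
  exact ne_bot_of_mem (Mod.grade_le_eComp hσ hm) hmne

theorem schur_nonbot_tgt : Mod.eComp (G.tgt γ) ≠ ⊥ := by
  obtain ⟨σ, m, hm, hσ, hgm, _⟩ := Mod.hom_exists_witness hg hne
  exact ne_bot_of_mem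
    (Mod.grade_le_eComp (G.tgt_comp γ σ hσ.symm) (Mod.hom_apply_mem hg hσ.symm hm)) hgm

theorem schur_inj : ∀ m ∈ Mod.eComp (G.src γ), g m = 0 → m = 0 := by
  classical
  set f := G.src γ with hf
  set K : AddSubgroup M := Mod.eComp f ⊓ g.ker with hK
  have hKgraded : Mod.IsGradedSub K := by
    constructor
    · intro m hm a
      refine ⟨Mod.smul_mem_eComp hm.1 a, ?_⟩
      show g (Mod.smul m a) = 0
      rw [hg.1 m a, show g m = 0 from hm.2, Mod.smul_zero_left]
    · intro m hm
      rw [← Mod.sum_pi m]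
      refine AddSubgroup.sum_mem _ ?_
      intro δ hδs
      by_cases hδ : G.tgt δ = f
      · refine le_iSup (fun δ => Mod.grade δ ⊓ K) δ ⟨Mod.piHom_mem δ m, ?_, ?_⟩
        · exact Mod.grade_le_eComp hδ (Mod.piHom_mem δ m)
        · -- π δ m ∈ ker g, via uniqueness of decomposition
          show g (Mod.piHom δ m) = 0
          have hsum : ∑ τ ∈ (Mod.decEquiv.symm m).support.filter
              (fun τ => G.tgt τ = f), g (Mod.piHom τ m) = 0 := by
            have h1 : ∑ τ ∈ (Mod.decEquiv.symm m).support, g (Mod.piHom τ m) = 0 := by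
              rw [← map_sum, Mod.sum_pi m]; exact hm.2
            rw [← h1]
            apply Finset.sum_filter_of_ne
            intro τ _ hne2
            by_contra hτ
            exact hne2 (by rw [Mod.pi_eComp_ne hm.1 hτ, map_zero])
          have := Mod.sum_eq_zero_unique (s := (Mod.decEquiv.symm m).support.filter
              (fun τ => G.tgt τ = f))
            (deg := fun τ => if h : G.src γ = G.tgt τ then G.comp γ τ h else τ)
            (c := fun τ => g (Mod.piHom τ m)) ?_ ?_ hsum
          · by_cases hmem : δ ∈ (Mod.decEquiv.symm m).support
            · exact this δ (Finset.mem_filter.mpr ⟨hmem, hδ⟩)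
            · have : Mod.piHom δ m = 0 := by
                show ((Mod.decEquiv.symm m) δ : M) = 0
                rw [DFinsupp.notMem_support_iff.mp hmem]; rfl
              rw [this, map_zero]
          · intro τ hτ τ' hτ' heq
            rw [Finset.coe_filter, Set.mem_setOf_eq] at hτ hτ'
            simp only at heq
            rw [dif_pos (show G.src γ = G.tgt τ from hτ.2.symm),
              dif_pos (show G.src γ = G.tgt τ' from hτ'.2.symm)] at heq
            exact G.comp_cancel _ _ heq
          · intro τ hτ
            rw [Finset.mem_filter] at hτ
            rw [dif_pos (show G.src γ = G.tgt τ from hτ.2.symm)]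
            exact Mod.hom_apply_mem hg _ (Mod.piHom_mem τ m)
      · rw [Mod.pi_eComp_ne hm.1 hδ]
        exact zero_mem _
  have hKle : K ≤ Mod.eComp f := inf_le_left
  have hsimple := hs.2 f (G.isObj_src γ) (Mod.schur_nonbot_src hs hg hne)
  rcases hsimple.2.2 K hKgraded hKle with hbot | htop
  · intro m hm hgm
    have : m ∈ K := ⟨hm, hgm⟩
    rwa [hbot, AddSubgroup.mem_bot] at this
  · exfalso
    apply hne
    ext m
    show g m = 0
    refine Mod.hom_induction (C := fun m => g m = 0) (map_zero g) ?_ ?_ m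
    · intro a b ha hb; rw [map_add, ha, hb, add_zero]
    · intro σ m hm
      by_cases hσ : G.tgt σ = f
      · have : m ∈ K := htop ▸ Mod.grade_le_eComp hσ hm
        exact this.2
      · exact Mod.hom_vanish hg hσ hm

theorem schur_surj : ∀ m ∈ Mod.eComp (G.tgt γ), ∃ n ∈ Mod.eComp (G.src γ), g n = m := by
  classical
  set f := G.src γ with hf
  set e := G.tgt γ with he
  set N : AddSubgroup M := (Mod.eComp f).map g with hN
  have hNgraded : Mod.IsGradedSub N := by
    constructor
    · rintro x ⟨n, hn, rfl⟩ a
      exact ⟨Mod.smul n a, Mod.smul_mem_eComp hn a, hg.1 n a⟩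
    · rintro x ⟨n, hn, rfl⟩
      have hgn : g n = ∑ δ ∈ (Mod.decEquiv.symm n).support, g (Mod.piHom δ n) := by
        conv_lhs => rw [← Mod.sum_pi n]
        rw [map_sum]
      rw [hgn]
      refine AddSubgroup.sum_mem _ ?_
      intro δ _
      by_cases hδ : G.tgt δ = f
      · refine le_iSup (fun δ => Mod.grade δ ⊓ N) (G.comp γ δ (hδ ▸ rfl)) ?_
        exact ⟨Mod.hom_apply_mem hg _ (Mod.piHom_mem δ n),
          ⟨Mod.piHom δ n, Mod.grade_le_eComp hδ (Mod.piHom_mem δ n), rfl⟩⟩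
      · rw [Mod.pi_eComp_ne hn hδ, map_zero]
        exact zero_mem _
  have hNle : N ≤ Mod.eComp e := by
    rintro x ⟨n, hn, rfl⟩
    exact Mod.hom_mem_eComp hg n hn
  have hNne : N ≠ ⊥ := by
    obtain ⟨σ, m, hm, hσ, hgm, _⟩ := Mod.hom_exists_witness hg hne
    exact ne_bot_of_mem ⟨m, Mod.grade_le_eComp hσ hm, rfl⟩ hgm
  have hsimple := hs.2 e (G.isObj_tgt γ) (Mod.schur_nonbot_tgt hs hg hne)
  rcases hsimple.2.2 N hNgraded hNle with hbot | htop
  · exact absurd hbot hNne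
  · intro m hm
    have : m ∈ N := htop ▸ hm
    obtain ⟨n, hn, hgn⟩ := this
    exact ⟨n, hn, hgn⟩

theorem schur_surj_homog : ∀ (δ : Γ) (hδ : G.tgt δ = G.tgt γ), ∀ m ∈ Mod.grade δ,
    ∃ n, n ∈ Mod.grade (G.comp (G.inv γ) δ (by rw [G.src_inv, hδ])) ∧ g n = m := by
  classical
  intro δ hδ m hm
  obtain ⟨n₀, hn₀, hgn₀⟩ := Mod.schur_surj hs hg hne m
    (Mod.grade_le_eComp hδ hm)
  set τ₀ := G.comp (G.inv γ) δ (by rw [G.src_inv, hδ]) with hτ₀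
  refine ⟨Mod.piHom τ₀ n₀, Mod.piHom_mem τ₀ n₀, ?_⟩
  have hcompτ₀ : G.comp γ τ₀ (by rw [hτ₀, G.tgt_comp, G.tgt_inv]) = δ := G.comp_inv_comp γ δ hδ.symm
  have key : m = ∑ τ ∈ (Mod.decEquiv.symm n₀).support,
      Mod.piHom δ (g (Mod.piHom τ n₀)) := by
    conv_lhs => rw [← Mod.pi_self hm, ← hgn₀]
    conv_lhs => rw [← Mod.sum_pi n₀]
    rw [map_sum, map_sum]
  have key2 : ∀ τ ∈ (Mod.decEquiv.symm n₀).support,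
      Mod.piHom δ (g (Mod.piHom τ n₀)) = if τ = τ₀ then g (Mod.piHom τ n₀) else 0 := by
    intro τ _
    by_cases hτf : G.tgt τ = G.src γ
    · have hgτ := Mod.hom_apply_mem hg hτf.symm (Mod.piHom_mem τ n₀)
      by_cases hττ₀ : τ = τ₀
      · rw [if_pos hττ₀]
        apply Mod.pi_self
        have heqc : G.comp γ τ hτf.symm = δ := by
          rw [G.comp_congr (rfl : γ = γ) hττ₀ hτf.symm, hcompτ₀]
        rwa [heqc] at hgτ
      · rw [if_neg hττ₀]
        refine Mod.pi_ne hgτ ?_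
        intro hcomp
        apply hττ₀
        have h5 := G.comp_congr (γ := G.inv γ) rfl hcomp (by rw [G.src_inv, hδ])
        rw [G.inv_comp_comp] at h5
        exact h5.symm.trans hτ₀.symm
    · have h6 : ¬ τ = τ₀ := fun hττ₀ => hτf (by rw [hττ₀, hτ₀, G.tgt_comp, G.tgt_inv])
      rw [Mod.pi_eComp_ne hn₀ hτf, map_zero, map_zero, if_neg h6]
  rw [Finset.sum_congr rfl key2, Finset.sum_ite_eq' _ τ₀ (fun τ => g (Mod.piHom τ n₀))] at key
  by_cases hmem : τ₀ ∈ (Mod.decEquiv.symm n₀).support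
  · rw [if_pos hmem] at key; exact key.symm
  · rw [if_neg hmem] at key
    have hz : Mod.piHom τ₀ n₀ = 0 := by
      show ((Mod.decEquiv.symm n₀) τ₀ : M) = 0
      rw [DFinsupp.notMem_support_iff.mp hmem]; rfl
    rw [hz, map_zero, key]

theorem schur_inv : ∃ h : M →+ M,
    h ∈ Mod.HomGrade (G.inv γ) ∧
    (∀ n ∈ Mod.eComp (G.src γ), h (g n) = n) ∧
    (∀ m ∈ Mod.eComp (G.tgt γ), g (h m) = m) ∧
    (∀ (σ : Γ) (m : M), m ∈ Mod.grade σ → G.tgt σ ≠ G.tgt γ → h m = 0) ∧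
    (∀ m, h m ∈ Mod.eComp (G.src γ)) := by
  classical
  have hinj := Mod.schur_inj hs hg hne
  have hsurj := Mod.schur_surj hs hg hne
  have hsh := Mod.schur_surj_homog hs hg hne
  have hmem : ∀ n ∈ Mod.eComp (G.src γ), g n ∈ Mod.eComp (G.tgt γ) := Mod.hom_mem_eComp hg
  set f := G.src γ with hfdef
  set e := G.tgt γ with hedef
  have hinj2 : ∀ x y : M, x ∈ Mod.eComp f → y ∈ Mod.eComp f → g x = g y → x = y := by
    intro x y hx hy hxy
    have h1 : g (x - y) = 0 := by rw [map_sub, hxy, sub_self]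
    have h2 := hinj (x - y) (sub_mem hx hy) h1
    exact sub_eq_zero.mp h2
  let g' : Mod.eComp f →+ Mod.eComp e := AddMonoidHom.mk'
    (fun n => ⟨g n, hmem n n.2⟩)
    (fun a b => Subtype.ext (by simp))
  have hbij : Function.Bijective g' := by
    constructor
    · intro a b hab
      exact Subtype.ext (hinj2 a b a.2 b.2 (congrArg Subtype.val hab))
    · rintro ⟨m, hm⟩
      obtain ⟨n, hn, hgn⟩ := hsurj m hm
      exact ⟨⟨n, hn⟩, Subtype.ext hgn⟩
  let ψ : Mod.eComp f ≃+ Mod.eComp e := AddEquiv.ofBijective g' hbij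
  have hψapp : ∀ n : Mod.eComp f, (ψ n : M) = g n := fun n => rfl
  let h : M →+ M := AddMonoidHom.mk'
    (fun m => (ψ.symm ⟨Mod.proj e m, Mod.proj_mem e m⟩ : M))
    (fun a b => by
      have heq : (⟨Mod.proj e (a + b), Mod.proj_mem e (a + b)⟩ : Mod.eComp e)
          = ⟨Mod.proj e a, Mod.proj_mem e a⟩ + ⟨Mod.proj e b, Mod.proj_mem e b⟩ :=
        Subtype.ext (by simp)
      rw [heq, map_add]
      rfl)
  have happly : ∀ m : M, h m = (ψ.symm ⟨Mod.proj e m, Mod.proj_mem e m⟩ : M) :=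
    fun m => rfl
  have hψsymm : ∀ (x : Mod.eComp e) (n : Mod.eComp f), g n = (x : M) →
      (ψ.symm x : M) = n := by
    intro x n hx
    have h1 : ψ n = x := Subtype.ext (by rw [hψapp]; exact hx)
    rw [← h1, AddEquiv.symm_apply_apply]
  have hval : ∀ (m : M) (hm : m ∈ Mod.eComp e),
      h m = (ψ.symm ⟨m, hm⟩ : M) := by
    intro m hm
    rw [happly]
    congr 1
    exact congrArg _ (Subtype.ext (Mod.proj_eq_self hm))
  have h_mem : ∀ m, h m ∈ Mod.eComp f := fun m =>
    (ψ.symm ⟨Mod.proj e m, Mod.proj_mem e m⟩).2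
  have h_g : ∀ n ∈ Mod.eComp f, h (g n) = n := by
    intro n hn
    rw [hval (g n) (hmem n hn)]
    exact hψsymm ⟨g n, hmem n hn⟩ ⟨n, hn⟩ rfl
  have g_h : ∀ m ∈ Mod.eComp e, g (h m) = m := by
    intro m hm
    rw [hval m hm, ← hψapp, AddEquiv.apply_symm_apply]
  have h_vanish : ∀ (σ : Γ) (m : M), m ∈ Mod.grade σ → G.tgt σ ≠ e → h m = 0 := by
    intro σ m hm hσ
    rw [happly]
    have h1 : (⟨Mod.proj e m, Mod.proj_mem e m⟩ : Mod.eComp e) = 0 :=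
      Subtype.ext (Mod.proj_vanish hm hσ)
    rw [h1, map_zero]
    rfl
  have h_homog : ∀ (σ : Γ) (hσ : G.tgt σ = e) (m : M), m ∈ Mod.grade σ →
      h m ∈ Mod.grade (G.comp (G.inv γ) σ (by rw [G.src_inv, hσ])) := by
    intro σ hσ m hm
    obtain ⟨n, hn, hgn⟩ := hsh σ hσ m hm
    have hn' : n ∈ Mod.eComp f :=
      Mod.grade_le_eComp (by rw [G.tgt_comp, G.tgt_inv]) hn
    rw [← hgn, h_g n hn']
    exact hn
  refine ⟨h, ⟨?_, ?_⟩, h_g, g_h, h_vanish, h_mem⟩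
  · -- R-linearity
    intro m a
    revert a
    refine Mod.hom_induction
      (C := fun m => ∀ a, h (Mod.smul m a) = Mod.smul (h m) a) ?_ ?_ ?_ m
    · intro a; rw [Mod.smul_zero_left, map_zero, Mod.smul_zero_left]
    · intro x y hx hy a
      rw [Mod.add_smul, map_add, hx, hy, map_add, Mod.add_smul]
    · intro σ x hx
      refine R_induction (RG := RG)
        (C := fun a => h (Mod.smul x a) = Mod.smul (h x) a) ?_ ?_ ?_
      · show h (Mod.smul x 0) = Mod.smul (h x) 0
        rw [Mod.smul_zero_right, map_zero, Mod.smul_zero_right]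
      · intro a b ha hb
        show h (Mod.smul x (a + b)) = Mod.smul (h x) (a + b)
        rw [Mod.smul_add, map_add, ha, hb, Mod.smul_add]
      · intro τ a ha
        by_cases hc : G.src σ = G.tgt τ
        · have hx' : Mod.smul x a ∈ Mod.grade (G.comp σ τ hc) :=
            Mod.smul_mem σ τ hc x a hx ha
          by_cases he : G.tgt σ = e
          · have hxe : x ∈ Mod.eComp e := Mod.grade_le_eComp he hx
            have hx'e : Mod.smul x a ∈ Mod.eComp e :=
              Mod.grade_le_eComp (by rw [G.tgt_comp]; exact he) hx'
            refine hinj2 _ _ (h_mem _) (Mod.smul_mem_eComp (h_mem x) a) ?_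
            rw [g_h _ hx'e, hg.1 (h x) a, g_h _ hxe]
          · rw [h_vanish σ x hx he, Mod.smul_zero_left]
            exact h_vanish _ _ hx' (by rw [G.tgt_comp]; exact he)
        · rw [Mod.smul_ne σ τ hc x a hx ha, map_zero]
          by_cases he : G.tgt σ = e
          · have hhx := h_homog σ he x hx
            rw [Mod.smul_ne _ τ (by rw [G.src_comp]; exact hc) (h x) a hhx ha]
          · rw [h_vanish σ x hx he, Mod.smul_zero_left]
  · -- homogeneity (shiftGrade membership)
    intro σ m hm
    by_cases hσ : G.tgt σ = e
    · have h1 : G.src (G.inv γ) = G.tgt σ := by rw [G.src_inv, hσ]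
      rw [Mod.shiftGrade_pos h1]
      exact h_homog σ hσ m hm
    · have h1 : G.src (G.inv γ) ≠ G.tgt σ := by rw [G.src_inv]; exact fun hh => hσ hh.symm
      rw [Mod.shiftGrade_neg h1, h_vanish σ m hm hσ]
      exact AddSubgroup.mem_bot.mpr rfl

theorem part2_fwd {e f : Γ} (hγe : G.tgt γ = e) (hγf : G.src γ = f) :
    ∃ hN : Mod.IsGradedSub (Mod.eComp e),
      Mod.SubIso Mod (Mod.eComp e) (Mod.eComp f) hN := by
  subst hγe; subst hγf
  obtain ⟨h, hh, h_g, g_h, h_vanish, h_mem⟩ := Mod.schur_inv hs hg hne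
  have gmem : ∀ y ∈ Mod.eComp (G.src γ), g y ∈ Mod.eComp (G.tgt γ) := Mod.hom_mem_eComp hg
  refine ⟨Mod.eComp_isGradedSub _, G.inv γ,
    { toFun := fun x => ⟨h x, h_mem x⟩
      invFun := fun y => ⟨g y, gmem y y.2⟩
      left_inv := fun x => Subtype.ext (g_h x x.2)
      right_inv := fun y => Subtype.ext (h_g y y.2)
      map_add' := fun a b => Subtype.ext (by simp) }, ?_, ?_⟩
  · intro n a
    exact hh.1 n a
  · intro δ
    ext m
    simp only [Set.mem_image, Set.mem_setOf_eq]
    constructor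
    · rintro ⟨n, hn, rfl⟩
      by_cases hδ : G.tgt δ = G.tgt γ
      · refine ⟨h_mem n, ?_⟩
        rw [Mod.shiftGrade_pos (by rw [G.src_inv, hδ])]
        exact Mod.hom_apply_mem hh (by rw [G.src_inv, hδ]) hn
      · have hz : (n : M) = 0 := Mod.grade_eComp_eq_zero hδ hn n.2
        show h ↑n ∈ _ ∧ h ↑n ∈ _
        rw [hz, map_zero]
        exact ⟨zero_mem _, zero_mem _⟩
    · rintro ⟨hmf, hms⟩
      by_cases hδ : G.tgt δ = G.tgt γ
      · rw [Mod.shiftGrade_pos (by rw [G.src_inv, hδ])] at hms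
        have hn : g m ∈ Mod.grade δ := by
          have h1 := Mod.hom_apply_mem hg
            (by rw [G.tgt_comp, G.tgt_inv] : G.src γ = G.tgt (G.comp (G.inv γ) δ
              (by rw [G.src_inv, hδ]))) hms
          rwa [G.comp_inv_comp γ δ hδ.symm] at h1
        have hnE : g m ∈ Mod.eComp (G.tgt γ) := Mod.grade_le_eComp hδ hn
        refine ⟨⟨g m, hnE⟩, hn, ?_⟩
        exact h_g m hmf
      · rw [Mod.shiftGrade_neg (by rw [G.src_inv]; exact fun hx => hδ hx.symm),
          AddSubgroup.mem_bot] at hms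
        refine ⟨0, zero_mem _, ?_⟩
        show h ((0 : Mod.eComp (G.tgt γ)) : M) = m
        rw [ZeroMemClass.coe_zero, map_zero, hms]

end Schur

theorem hom_ne_witness {g : M →+ M} (hne : g ≠ 0) :
    ∃ (σ : Γ) (m : M), m ∈ Mod.grade σ ∧ g m ≠ 0 := by
  by_contra hcon
  push_neg at hcon
  apply hne
  ext m
  show g m = 0
  refine Mod.hom_induction (C := fun m => g m = 0) (map_zero g) ?_ ?_ m
  · intro a b ha hb; rw [map_add, ha, hb, add_zero]
  · exact hcon

theorem part2_bwd {e f : Γ} (hff : Mod.eComp f ≠ ⊥)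
    (hN : Mod.IsGradedSub (Mod.eComp e))
    (hiso : Mod.SubIso Mod (Mod.eComp e) (Mod.eComp f) hN)
    (hee : Mod.eComp e ≠ ⊥) :
    ∃ γ : Γ, G.tgt γ = e ∧ G.src γ = f ∧
      ∃ g : M →+ M, g ∈ Mod.HomGrade γ ∧ g ≠ 0 := by
  obtain ⟨σ, ψ, hlin, himg⟩ := hiso
  -- determine src and tgt of σ
  obtain ⟨δ₀, m₀, hδ₀, hm₀, hm₀ne⟩ := Mod.eComp_exists_ne hee
  have hm₀E : m₀ ∈ Mod.eComp e := Mod.grade_le_eComp hδ₀ hm₀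
  have hw : (ψ ⟨m₀, hm₀E⟩ : M) ∈ Mod.eComp f ∧ (ψ ⟨m₀, hm₀E⟩ : M) ∈ Mod.shiftGrade σ δ₀ :=
    (Set.ext_iff.mp (himg δ₀) _).mp ⟨⟨m₀, hm₀E⟩, hm₀, rfl⟩
  have hwne : (ψ ⟨m₀, hm₀E⟩ : M) ≠ 0 := by
    intro h0
    apply hm₀ne
    have h1 : ψ ⟨m₀, hm₀E⟩ = 0 := Subtype.ext h0
    have h2 : (⟨m₀, hm₀E⟩ : Mod.eComp e) = 0 := by
      apply ψ.injective
      rw [h1, map_zero]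
    exact congrArg Subtype.val h2
  have hσsrc : G.src σ = e := by
    by_contra hc
    have hc' : G.src σ ≠ G.tgt δ₀ := by rw [hδ₀]; exact hc
    rw [Mod.shiftGrade_neg hc', AddSubgroup.mem_bot] at hw
    exact hwne hw.2
  have hσc : G.src σ = G.tgt δ₀ := by rw [hδ₀, hσsrc]
  have hw2 : (ψ ⟨m₀, hm₀E⟩ : M) ∈ Mod.grade (G.comp σ δ₀ hσc) := by
    have := hw.2
    rwa [Mod.shiftGrade_pos hσc] at this
  have hσtgt : G.tgt σ = f := by
    by_contra hc
    refine hwne (Mod.grade_eComp_eq_zero ?_ hw2 hw.1)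
    rw [G.tgt_comp]; exact hc
  -- define the inverse hom
  have gmem : ∀ m : M, (ψ.symm ⟨Mod.proj f m, Mod.proj_mem f m⟩ : M) ∈ Mod.eComp e :=
    fun m => (ψ.symm ⟨Mod.proj f m, Mod.proj_mem f m⟩).2
  let g : M →+ M := AddMonoidHom.mk'
    (fun m => (ψ.symm ⟨Mod.proj f m, Mod.proj_mem f m⟩ : M))
    (fun a b => by
      have heq : (⟨Mod.proj f (a + b), Mod.proj_mem f (a + b)⟩ : Mod.eComp f)
          = ⟨Mod.proj f a, Mod.proj_mem f a⟩ + ⟨Mod.proj f b, Mod.proj_mem f b⟩ :=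
        Subtype.ext (by simp)
      rw [heq, map_add]
      rfl)
  have gval : ∀ (m : M) (hm : m ∈ Mod.eComp f), g m = (ψ.symm ⟨m, hm⟩ : M) := by
    intro m hm
    show (ψ.symm ⟨Mod.proj f m, Mod.proj_mem f m⟩ : M) = _
    congr 2
    exact Subtype.ext (Mod.proj_eq_self hm)
  have gvanish : ∀ (τ : Γ) (m : M), m ∈ Mod.grade τ → G.tgt τ ≠ f → g m = 0 := by
    intro τ m hm hτ
    show (ψ.symm ⟨Mod.proj f m, Mod.proj_mem f m⟩ : M) = 0
    have h1 : (⟨Mod.proj f m, Mod.proj_mem f m⟩ : Mod.eComp f) = 0 :=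
      Subtype.ext (Mod.proj_vanish hm hτ)
    rw [h1, map_zero]
    rfl
  have ggrade : ∀ (τ : Γ) (hτ : G.tgt τ = f) (m : M), m ∈ Mod.grade τ →
      g m ∈ Mod.grade (G.comp (G.inv σ) τ (by rw [G.src_inv, hσtgt, hτ])) := by
    intro τ hτ m hm
    have hc1 : G.src σ = G.tgt (G.comp (G.inv σ) τ (by rw [G.src_inv, hσtgt, hτ])) := by
      rw [G.tgt_comp, G.tgt_inv]
    have hc2 : G.comp σ (G.comp (G.inv σ) τ (by rw [G.src_inv, hσtgt, hτ])) hc1 = τ :=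
      G.comp_inv_comp σ τ (by rw [hσtgt, hτ])
    have hmem2 : m ∈ {x : M | x ∈ Mod.eComp f ∧
        x ∈ Mod.shiftGrade σ (G.comp (G.inv σ) τ (by rw [G.src_inv, hσtgt, hτ]))} := by
      refine ⟨Mod.grade_le_eComp hτ hm, ?_⟩
      rw [Mod.shiftGrade_pos hc1, hc2]
      exact hm
    rw [← himg (G.comp (G.inv σ) τ (by rw [G.src_inv, hσtgt, hτ]))] at hmem2
    obtain ⟨n, hn, hψn⟩ := hmem2
    have hmf : m ∈ Mod.eComp f := Mod.grade_le_eComp hτ hm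
    have : g m = (n : M) := by
      rw [gval m hmf]
      have h2 : (⟨m, hmf⟩ : Mod.eComp f) = ψ n := Subtype.ext hψn.symm
      rw [h2, AddEquiv.symm_apply_apply]
    rw [this]
    exact hn
  have glin : ∀ (m : M) (a : R), g (Mod.smul m a) = Mod.smul (g m) a := by
    have claimA : ∀ m (hm : m ∈ Mod.eComp f) (a : R),
        g (Mod.smul m a) = Mod.smul (g m) a := by
      intro m hm a
      have hsm : Mod.smul m a ∈ Mod.eComp f := Mod.smul_mem_eComp hm a
      set n := ψ.symm ⟨m, hm⟩ with hn
      have hlin2 := hlin n a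
      have hψn : (ψ n : M) = m := by rw [hn, AddEquiv.apply_symm_apply]
      rw [hψn] at hlin2
      rw [gval _ hsm]
      have h2 : (⟨Mod.smul m a, hsm⟩ : Mod.eComp f)
          = ψ ⟨Mod.smul (n : M) a, hN.1 (n : M) n.2 a⟩ := Subtype.ext hlin2.symm
      rw [h2, AddEquiv.symm_apply_apply]
      show Mod.smul (n : M) a = _
      rw [gval m hm]
    intro m a
    revert a
    refine Mod.hom_induction
      (C := fun m => ∀ a, g (Mod.smul m a) = Mod.smul (g m) a) ?_ ?_ ?_ m
    · intro a; rw [Mod.smul_zero_left, map_zero, Mod.smul_zero_left]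
    · intro x y hx hy a
      rw [Mod.add_smul, map_add, hx, hy, map_add, Mod.add_smul]
    · intro τ x hx
      by_cases hτ : G.tgt τ = f
      · exact fun a => claimA x (Mod.grade_le_eComp hτ hx) a
      · refine R_induction (RG := RG)
          (C := fun a => g (Mod.smul x a) = Mod.smul (g x) a) ?_ ?_ ?_
        · show g (Mod.smul x 0) = Mod.smul (g x) 0
          rw [Mod.smul_zero_right, map_zero, Mod.smul_zero_right]
        · intro a b ha hb
          show g (Mod.smul x (a + b)) = Mod.smul (g x) (a + b)
          rw [Mod.smul_add, map_add, ha, hb, Mod.smul_add]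
        · intro υ a ha
          rw [gvanish τ x hx hτ, Mod.smul_zero_left]
          by_cases hc : G.src τ = G.tgt υ
          · exact gvanish _ _ (Mod.smul_mem τ υ hc x a hx ha)
              (by rw [G.tgt_comp]; exact hτ)
          · rw [Mod.smul_ne τ υ hc x a hx ha, map_zero]
  refine ⟨G.inv σ, by rw [G.tgt_inv, hσsrc], by rw [G.src_inv, hσtgt], g, ⟨glin, ?_⟩, ?_⟩
  · -- homogeneity
    intro τ m hm
    by_cases hτ : G.tgt τ = f
    · have h1 : G.src (G.inv σ) = G.tgt τ := by rw [G.src_inv, hσtgt, hτ]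
      rw [Mod.shiftGrade_pos h1]
      exact ggrade τ hτ m hm
    · have h1 : G.src (G.inv σ) ≠ G.tgt τ := by
        rw [G.src_inv, hσtgt]; exact fun hx => hτ hx.symm
      rw [Mod.shiftGrade_neg h1, gvanish τ m hm hτ]
      exact AddSubgroup.mem_bot.mpr rfl
  · -- nonzero
    obtain ⟨δ₁, x, hδ₁, hx, hxne⟩ := Mod.eComp_exists_ne hff
    have hxf : x ∈ Mod.eComp f := Mod.grade_le_eComp hδ₁ hx
    intro h0
    apply hxne
    have h1 : g x = 0 := by rw [h0]; rfl
    rw [gval x hxf] at h1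
    have h2 : (⟨x, hxf⟩ : Mod.eComp f) = 0 := by
      apply ψ.symm.injective
      rw [map_zero]
      exact Subtype.ext h1
    exact congrArg Subtype.val h2

end GammaMod

end SchurDev

/-- graded Schur's Lemma.  Let `S` be a `Γ₀`-simple graded right
module over the object unital `Γ`-graded ring `R`, and let `D := END_R(S)` (whose
homogeneous component of degree `γ` is `Mod.HomGrade γ`).  Then:
(1) `D` is a gr-division ring (it is nonzero, and every nonzero homogeneous
    `g ∈ D_γ` has an inverse `h ∈ D_{γ⁻¹}` with `g ∘ h = 𝟙_{r(γ)}` and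
    `h ∘ g = 𝟙_{d(γ)}`);
(2) for objects `e, f` with `S(e) ≠ 0 ≠ S(f)`, there is `γ ∈ eΓf` with `D_γ ≠ 0`
    iff `S(e)` and `S(f)` are in the same isoshift class;
(3) `D` is gr-prime (equivalently: `D ≠ 0` and `gDh ≠ 0` for all nonzero
    homogeneous `g, h ∈ D`) iff all the nonzero `S(e)` lie in a single isoshift
    class. -/
theorem graded_schur_lemma
    {Γ : Type u} (G : Gpd Γ) {R : Type v} [NonUnitalRing R] (RG : GammaRing G R)
    {M : Type w} [AddCommGroup M] (Mod : GammaMod RG M) (hs : Mod.IsGamma0Simple) :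
    -- (1)
    ((∃ (γ : Γ) (g : M →+ M), g ∈ Mod.HomGrade γ ∧ g ≠ 0) ∧
     (∀ (γ : Γ) (g : M →+ M), g ∈ Mod.HomGrade γ → g ≠ 0 →
       ∃ h : M →+ M, h ∈ Mod.HomGrade (G.inv γ) ∧
         (∀ (σ : Γ) (m : M), m ∈ Mod.grade σ →
           (G.tgt σ = G.src γ → h (g m) = m) ∧ (G.tgt σ ≠ G.src γ → h (g m) = 0)) ∧
         (∀ (σ : Γ) (m : M), m ∈ Mod.grade σ →
           (G.tgt σ = G.tgt γ → g (h m) = m) ∧ (G.tgt σ ≠ G.tgt γ → g (h m) = 0)))) ∧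
    -- (2)
    (∀ e f : Γ, G.IsObj e → G.IsObj f → Mod.eComp e ≠ ⊥ → Mod.eComp f ≠ ⊥ →
      ((∃ γ : Γ, G.tgt γ = e ∧ G.src γ = f ∧ ∃ g : M →+ M, g ∈ Mod.HomGrade γ ∧ g ≠ 0) ↔
        ∃ hN : Mod.IsGradedSub (Mod.eComp e),
          Mod.SubIso Mod (Mod.eComp e) (Mod.eComp f) hN)) ∧
    -- (3)
    (((∃ (γ : Γ) (g : M →+ M), g ∈ Mod.HomGrade γ ∧ g ≠ 0) ∧
      ∀ (γ δ : Γ) (g h : M →+ M), g ∈ Mod.HomGrade γ → g ≠ 0 →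
        h ∈ Mod.HomGrade δ → h ≠ 0 →
        ∃ (ε : Γ) (k : M →+ M), k ∈ Mod.HomGrade ε ∧ g.comp (k.comp h) ≠ 0) ↔
      ∀ e f : Γ, G.IsObj e → G.IsObj f → Mod.eComp e ≠ ⊥ → Mod.eComp f ≠ ⊥ →
        ∃ hN : Mod.IsGradedSub (Mod.eComp e),
          Mod.SubIso Mod (Mod.eComp e) (Mod.eComp f) hN) := by
  classical
  have hex : ∃ e : Γ, G.IsObj e ∧ Mod.eComp e ≠ ⊥ := by
    obtain ⟨m, hmne⟩ := hs.1
    have hpi : ∃ γ, Mod.piHom γ m ≠ 0 := by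
      by_contra hcon
      push_neg at hcon
      apply hmne
      rw [← Mod.sum_pi m]
      exact Finset.sum_eq_zero (fun γ _ => hcon γ)
    obtain ⟨γ₀, hγ₀⟩ := hpi
    exact ⟨G.tgt γ₀, G.isObj_tgt γ₀,
      GammaMod.ne_bot_of_mem (Mod.grade_le_eComp rfl (Mod.piHom_mem γ₀ m)) hγ₀⟩
  have hDne : ∃ (γ : Γ) (g : M →+ M), g ∈ Mod.HomGrade γ ∧ g ≠ 0 := by
    obtain ⟨e, he, hne⟩ := hex
    exact ⟨e, Mod.proj e, Mod.proj_homGrade he, Mod.proj_ne_zero hne⟩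
  refine ⟨⟨hDne, ?_⟩, ?_, ?_⟩
  · -- Part (1)
    intro γ g hg hne
    obtain ⟨h, hh, h_g, g_h, h_vanish, h_mem⟩ := Mod.schur_inv hs hg hne
    refine ⟨h, hh, ?_, ?_⟩
    · intro σ m hm
      constructor
      · intro hσ; exact h_g m (Mod.grade_le_eComp hσ hm)
      · intro hσ; rw [Mod.hom_vanish hg hσ hm, map_zero]
    · intro σ m hm
      constructor
      · intro hσ; exact g_h m (Mod.grade_le_eComp hσ hm)
      · intro hσ; rw [h_vanish σ m hm hσ, map_zero]
  · -- Part (2)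
    intro e f he hf hee hff
    constructor
    · rintro ⟨γ, hγe, hγf, g, hg, hne⟩
      exact Mod.part2_fwd hs hg hne hγe hγf
    · rintro ⟨hN, hiso⟩
      exact Mod.part2_bwd hff hN hiso hee
  · -- Part (3)
    constructor
    · rintro ⟨_, hprime⟩ e f he hf hee hff
      obtain ⟨ε, k, hk, hcne⟩ := hprime e f (Mod.proj e) (Mod.proj f)
        (Mod.proj_homGrade he) (Mod.proj_ne_zero hee)
        (Mod.proj_homGrade hf) (Mod.proj_ne_zero hff)
      obtain ⟨σ, m, hm, hcm⟩ := Mod.hom_ne_witness hcne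
      have hcm' : Mod.proj e (k (Mod.proj f m)) ≠ 0 := hcm
      have hσf : G.tgt σ = f := by
        by_contra hσ
        apply hcm'
        rw [Mod.proj_vanish hm hσ, map_zero, map_zero]
      have hpf : Mod.proj f m = m := by rw [Mod.proj_of hm, if_pos hσf]
      rw [hpf] at hcm'
      have hεσ : G.src ε = G.tgt σ := by
        by_contra hc
        apply hcm'
        rw [Mod.hom_vanish hk (fun hh2 => hc hh2.symm) hm, map_zero]
      have hkm : k m ∈ Mod.grade (G.comp ε σ hεσ) := Mod.hom_apply_mem hk hεσ hm
      have hεe : G.tgt ε = e := by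
        by_contra hc
        apply hcm'
        rw [Mod.proj_vanish hkm (by rw [G.tgt_comp]; exact hc)]
      have hkne : k ≠ 0 := by
        intro h0
        apply hcm'
        rw [h0]
        simp
      have hεf : G.src ε = f := by rw [hεσ, hσf]
      exact Mod.part2_fwd hs hk hkne hεe hεf
    · intro hall
      refine ⟨hDne, ?_⟩
      intro γ δ g h hg hgne hh hhne
      have h1 := Mod.schur_nonbot_src hs hg hgne
      have h2 := Mod.schur_nonbot_tgt hs hh hhne
      have h3 := Mod.schur_nonbot_src hs hh hhne
      obtain ⟨hN, hiso⟩ := hall (G.src γ) (G.tgt δ) (G.isObj_src γ) (G.isObj_tgt δ) h1 h2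
      obtain ⟨ε, hεt, hεs, k, hk, hkne⟩ := Mod.part2_bwd h2 hN hiso h1
      obtain ⟨σ, m, hσ, hm, hmne⟩ := Mod.eComp_exists_ne h3
      refine ⟨ε, k, hk, ?_⟩
      intro h0
      have inj_g := Mod.schur_inj hs hg hgne
      have inj_h := Mod.schur_inj hs hh hhne
      have inj_k := Mod.schur_inj hs hk hkne
      have hδσ : G.src δ = G.tgt σ := hσ.symm
      have hhm : h m ∈ Mod.grade (G.comp δ σ hδσ) := Mod.hom_apply_mem hh hδσ hm
      have hhm_ne : h m ≠ 0 := fun hz => hmne (inj_h m (Mod.grade_le_eComp hσ hm) hz)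
      have hεc : G.src ε = G.tgt (G.comp δ σ hδσ) := by rw [G.tgt_comp, hεs]
      have hkm : k (h m) ∈ Mod.grade (G.comp ε (G.comp δ σ hδσ) hεc) :=
        Mod.hom_apply_mem hk hεc hhm
      have hhmE : h m ∈ Mod.eComp (G.src ε) := by
        rw [hεs]
        exact Mod.grade_le_eComp (G.tgt_comp δ σ hδσ) hhm
      have hkm_ne : k (h m) ≠ 0 := fun hz => hhm_ne (inj_k (h m) hhmE hz)
      have hkmE : k (h m) ∈ Mod.eComp (G.src γ) := by
        rw [← hεt]
        exact Mod.grade_le_eComp (G.tgt_comp ε _ hεc) hkm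
      have hfinal : g (k (h m)) ≠ 0 := fun hz => hkm_ne (inj_g (k (h m)) hkmE hz)
      apply hfinal
      have heval : (g.comp (k.comp h)) m = g (k (h m)) := rfl
      rw [← heval, h0]
      rfl
end
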